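/- arXiv:1306.5117 — 10 statements merged into one kernel-verified Lean document; each statement's English description precedes it below -/
import Mathlib

section
/- Let X be a Hausdorff abelian topological group. Then X is a Š-space (every compact subset of X is sequentially compact) if and only if the group F₀(X) of X-valued null sequences with the uniform topology is a Š-space. -/
open Filter Topology Set

/-- The group of `X`-valued null sequences. -/
def c0 (X : Type*) [AddCommGroup X] [TopologicalSpace X] [IsTopologicalAddGroup X] :
    AddSubgroup (ℕ → X) where
  carrier := {x : ℕ → X | Tendsto x atTop (𝓝 0)}
  zero_mem' := tendsto_const_nhds
  add_mem' := fun ha hb => by simpa [Pi.add_def] using ha.add hb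
  neg_mem' := fun ha => by simpa [Pi.neg_def] using ha.neg

/-- The uniform topology on `c0 X`: induced by the topology of uniform convergence on `ℕ → X`,
where `X` carries its canonical group uniformity. -/
instance F0Topology (X : Type*) [AddCommGroup X] [TopologicalSpace X]
    [IsTopologicalAddGroup X] : TopologicalSpace (c0 X) :=
  letI : UniformSpace X := IsTopologicalAddGroup.rightUniformSpace X
  TopologicalSpace.induced (fun x : c0 X => UniformFun.ofFun (x : ℕ → X)) inferInstance

/-- A topological space is a Š-space if every compact subset is sequentially compact. -/
def IsShSpace (Y : Type*) [TopologicalSpace Y] : Prop :=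
  ∀ K : Set Y, IsCompact K → IsSeqCompact K

section Aux

variable {X : Type*} [AddCommGroup X] [TopologicalSpace X] [IsTopologicalAddGroup X]

/-- Evaluation at a coordinate is continuous on `c0 X`. -/
lemma c0_continuous_eval (n : ℕ) : Continuous (fun f : c0 X => (f : ℕ → X) n) := by
  letI : UniformSpace X := IsTopologicalAddGroup.rightUniformSpace X
  have h1 : Continuous (fun f : c0 X => UniformFun.ofFun (f : ℕ → X)) :=
    continuous_induced_dom
  exact (UniformFun.uniformContinuous_eval X n).continuous.comp h1

/-- The inclusion of `X` into `c0 X` as the first coordinate. -/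
noncomputable def c0incl (x : X) : c0 X :=
  ⟨fun n => if n = 0 then x else 0, by
    refine tendsto_const_nhds.congr' ?_
    filter_upwards [eventually_ge_atTop 1] with n hn
    rw [if_neg (Nat.one_le_iff_ne_zero.mp hn)]⟩

lemma continuous_c0incl : Continuous (c0incl (X := X)) := by
  letI : UniformSpace X := IsTopologicalAddGroup.rightUniformSpace X
  refine continuous_induced_rng.2 ?_
  have : UniformContinuous
      (fun x : X => UniformFun.ofFun (fun n => if n = 0 then x else (0 : X))) := by
    rw [UniformContinuous, (UniformFun.hasBasis_uniformity ℕ X).tendsto_right_iff]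
    intro V hV
    filter_upwards [hV] with p hp
    intro n
    by_cases hn : n = 0
    · simpa [UniformFun.gen, hn] using hp
    · simpa [UniformFun.gen, hn] using refl_mem_uniformity hV
  exact this.continuous

/-- Diagonal argument: a sequence whose coordinates live in sequentially compact sets admits
a subsequence converging in every coordinate. -/
lemma diagonal_subseq {Z : Type*} [TopologicalSpace Z] {K : ℕ → Set Z}
    (hK : ∀ n, IsSeqCompact (K n)) {u : ℕ → ℕ → Z} (hu : ∀ k n, u k n ∈ K n) :
    ∃ (φ : ℕ → ℕ) (L : ℕ → Z), StrictMono φ ∧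
      ∀ n, Tendsto (fun k => u (φ k) n) atTop (𝓝 (L n)) := by
  have step : ∀ (σ : ℕ → ℕ) (n : ℕ), ∃ (θ : ℕ → ℕ) (l : Z),
      StrictMono θ ∧ Tendsto (fun k => u (σ (θ k)) n) atTop (𝓝 l) := by
    intro σ n
    obtain ⟨l, -, θ, hθ, hl⟩ := hK n (x := fun k => u (σ k) n) (fun k => hu (σ k) n)
    exact ⟨θ, l, hθ, hl⟩
  choose Θ lim hΘ hlim using step
  set ψ : ℕ → ℕ → ℕ := fun n => Nat.rec (Θ id 0) (fun m σ => σ ∘ Θ σ (m + 1)) n with hψ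
  have hψs : ∀ m, ψ (m + 1) = ψ m ∘ Θ (ψ m) (m + 1) := fun m => rfl
  have hmono : ∀ n, StrictMono (ψ n) := by
    intro n
    induction n with
    | zero => exact hΘ id 0
    | succ m ih => exact ih.comp (hΘ (ψ m) (m + 1))
  set L : ℕ → Z := fun n => Nat.casesOn n (lim id 0) (fun m => lim (ψ m) (m + 1)) with hL
  have htend : ∀ n, Tendsto (fun k => u (ψ n k) n) atTop (𝓝 (L n)) := by
    intro n
    cases n with
    | zero => exact hlim id 0
    | succ m => exact hlim (ψ m) (m + 1)
  have hrel : ∀ n m, n ≤ m → ∃ τ : ℕ → ℕ, StrictMono τ ∧ ψ m = ψ n ∘ τ := by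
    intro n m hnm
    induction m, hnm using Nat.le_induction with
    | base => exact ⟨id, strictMono_id, rfl⟩
    | succ m hnm ih =>
      obtain ⟨τ, hτ, hτeq⟩ := ih
      refine ⟨τ ∘ Θ (ψ m) (m + 1), hτ.comp (hΘ _ _), ?_⟩
      rw [hψs m, hτeq]
      rfl
  refine ⟨fun k => ψ k k, L, ?_, ?_⟩
  · apply strictMono_nat_of_lt_succ
    intro k
    calc ψ k k < ψ k (k + 1) := hmono k (Nat.lt_succ_self k)
      _ ≤ ψ k (Θ (ψ k) (k + 1) (k + 1)) :=
          (hmono k).monotone ((hΘ (ψ k) (k + 1)).le_apply)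
      _ = ψ (k + 1) (k + 1) := rfl
  · intro n
    rw [tendsto_def]
    intro U hU
    have h1 : {j | u (ψ n j) n ∈ U} ∈ atTop := htend n hU
    rw [mem_atTop_sets] at h1
    obtain ⟨J, hJ⟩ := h1
    rw [mem_atTop_sets]
    refine ⟨max n J, fun k hk => ?_⟩
    obtain ⟨τ, hτ, hτeq⟩ := hrel n k (le_trans (le_max_left _ _) hk)
    have hk' : ψ k k = ψ n (τ k) := congrFun hτeq k
    have hτk : J ≤ τ k := le_trans (le_trans (le_max_right n J) hk) hτ.le_apply
    simpa [hk'] using hJ (τ k) hτk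

end Aux

/-- Let `X` be a Hausdorff abelian topological group. Then `X` is a Š-space (every compact
subset of `X` is sequentially compact) if and only if the group `F₀(X)` of `X`-valued null
sequences with the uniform topology is a Š-space. -/
theorem shSpace_iff_shSpace_c0 (X : Type*) [AddCommGroup X] [TopologicalSpace X]
    [IsTopologicalAddGroup X] [T2Space X] :
    IsShSpace X ↔ IsShSpace (c0 X) := by
  constructor
  · -- `X` Š ⇒ `c0 X` Š
    intro hX K hK
    intro x hx
    -- coordinate images are compact, hence sequentially compact
    have hKn : ∀ n, IsSeqCompact ((fun f : c0 X => (f : ℕ → X) n) '' K) := fun n =>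
      hX _ (hK.image (c0_continuous_eval n))
    have hu : ∀ k n, (x k : ℕ → X) n ∈ (fun f : c0 X => (f : ℕ → X) n) '' K :=
      fun k n => ⟨x k, hx k, rfl⟩
    obtain ⟨φ, L, hφ, hconv⟩ := diagonal_subseq hKn hu
    -- the coordinate map restricted to the compact `K` is a closed embedding
    haveI : CompactSpace ↥K := isCompact_iff_compactSpace.mp hK
    set g : ↥K → (ℕ → X) := fun f => ((f : c0 X) : ℕ → X) with hg
    have hgc : Continuous g :=
      (continuous_pi fun n => c0_continuous_eval n).comp continuous_subtype_val
    have hginj : Function.Injective g := fun a b h => by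
      apply Subtype.ext
      exact Subtype.ext h
    have hce : IsClosedEmbedding g := hgc.isClosedEmbedding hginj
    -- the pointwise limit lies in the image of `K`
    set x' : ℕ → ↥K := fun k => ⟨x k, hx k⟩ with hx'
    have hLtend : Tendsto (fun k => g (x' (φ k))) atTop (𝓝 L) :=
      tendsto_pi_nhds.2 fun n => hconv n
    have hrange : IsClosed (Set.range g) := hce.isClosed_range
    have hLmem : L ∈ Set.range g :=
      hrange.mem_of_tendsto hLtend (Eventually.of_forall fun k => Set.mem_range_self _)
    obtain ⟨f, hf⟩ := hLmem
    have : Tendsto (fun k => x' (φ k)) atTop (𝓝 f) := by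
      rw [hce.isEmbedding.tendsto_nhds_iff, hf]
      exact hLtend
    refine ⟨(f : c0 X), f.2, φ, hφ, ?_⟩
    exact (continuous_subtype_val.tendsto f).comp this
  · -- `c0 X` Š ⇒ `X` Š
    intro h K hK
    intro x hx
    have hK' : IsCompact (c0incl '' K) := hK.image continuous_c0incl
    obtain ⟨a, ha, φ, hφ, htend⟩ :=
      h _ hK' (x := fun k => c0incl (x k)) fun k => Set.mem_image_of_mem _ (hx k)
    obtain ⟨y, hy, rfl⟩ := ha
    refine ⟨y, hy, φ, hφ, ?_⟩
    have h0 : Tendsto (fun k => ((c0incl (x (φ k)) : c0 X) : ℕ → X) 0) atTop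
        (𝓝 (((c0incl y : c0 X) : ℕ → X) 0)) :=
      ((c0_continuous_eval 0).tendsto _).comp htend
    simpa [c0incl, Function.comp_def] using h0
end

section
/- Let E be an infinite subset of a topological group X. Then either E is left precompact (for every neighborhood U of the identity there is a finite set F ⊆ X with E ⊆ F·U), or E contains a countably infinite left uniformly discrete subset. -/
open Filter Topology Set Pointwise

/-- Let `E` be an infinite subset of a topological group `X`. Then either `E` is left
precompact (for every neighborhood `U` of the identity there is a finite set `F ⊆ X` with
`E ⊆ F·U`), or `E` contains a countably infinite left uniformly discrete subset, i.e. a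
countably infinite subset `A` that is left `U`-separated (`aU ∩ bU = ∅` for distinct
`a, b ∈ A`) for some neighborhood `U` of the identity. -/
theorem left_precompact_or_infinite_uniformly_discrete {X : Type*} [Group X]
    [TopologicalSpace X] [IsTopologicalGroup X] (E : Set X) (hE : E.Infinite) :
    (∀ U ∈ 𝓝 (1 : X), ∃ F : Finset X, E ⊆ ↑F * U) ∨
      (∃ A : Set X, A ⊆ E ∧ A.Countable ∧ A.Infinite ∧
        ∃ U ∈ 𝓝 (1 : X), ∀ a ∈ A, ∀ b ∈ A, a ≠ b → Disjoint (a • U) (b • U)) := by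
  classical
  by_cases hpc : ∀ U ∈ 𝓝 (1 : X), ∃ F : Finset X, E ⊆ ↑F * U
  · exact Or.inl hpc
  push_neg at hpc
  obtain ⟨U, hU, hcov⟩ := hpc
  have h1U : (1 : X) ∈ U := mem_of_mem_nhds hU
  obtain ⟨V, hVo, hV1, hVU⟩ := exists_open_nhds_one_mul_subset hU
  set W : Set X := V ∩ V⁻¹ with hWdef
  have hW : W ∈ 𝓝 (1 : X) := by
    refine Filter.inter_mem (hVo.mem_nhds hV1) (hVo.inv.mem_nhds ?_)
    simpa using hV1
  have hWW : W * W⁻¹ ⊆ U := by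
    refine (Set.mul_subset_mul (Set.inter_subset_left) ?_).trans hVU
    intro x hx
    simp only [Set.mem_inv, hWdef, Set.mem_inter_iff, Set.mem_inv] at hx
    simpa using hx.2
  have hpick : ∀ F : Finset X, ∃ x, x ∈ E ∧ x ∉ ↑F * U := by
    intro F
    obtain ⟨x, hx1, hx2⟩ := Set.not_subset.mp (hcov F)
    exact ⟨x, hx1, hx2⟩
  choose g hgE hgU using hpick
  let s : ℕ → Finset X := fun n => Nat.rec ∅ (fun _ F => insert (g F) F) n
  set a : ℕ → X := fun n => g (s n) with ha
  have hs_succ : ∀ n, s (n + 1) = insert (a n) (s n) := fun n => rfl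
  have h_mem : ∀ m n, m < n → a m ∈ s n := by
    intro m n hmn
    induction n with
    | zero => omega
    | succ k ih =>
      rw [hs_succ k, Finset.mem_insert]
      rcases Nat.lt_succ_iff_lt_or_eq.mp hmn with h | h
      · exact Or.inr (ih h)
      · exact Or.inl (by rw [h])
  have h_not : ∀ n, a n ∉ (SetLike.coe (s n)) * U := by intro n; rw [ha]; exact hgU (s n)
  have h_sep : ∀ m n, m < n → a n ∉ (a m) • U := by
    intro m n hmn hcontra
    obtain ⟨u, hu, hx⟩ := hcontra
    refine h_not n ?_
    rw [← hx]
    exact Set.mul_mem_mul (Finset.mem_coe.mpr (h_mem m n hmn)) hu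
  have h_inj : Function.Injective a := by
    intro m n hmn
    by_contra hne
    rcases Nat.lt_or_ge m n with h | h
    · exact h_sep m n h (by rw [← hmn]; exact ⟨1, h1U, by simp⟩)
    · have h' : n < m := lt_of_le_of_ne h (Ne.symm hne)
      exact h_sep n m h' (by rw [hmn]; exact ⟨1, h1U, by simp⟩)
  refine Or.inr ⟨Set.range a, ?_, Set.countable_range a, Set.infinite_range_of_injective h_inj,
    W, hW, ?_⟩
  · rintro x ⟨n, rfl⟩; exact hgE (s n)
  · rintro x ⟨m, rfl⟩ y ⟨n, rfl⟩ hne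
    have key : ∀ i j : ℕ, i < j → Disjoint (a i • W) (a j • W) := by
      intro i j hij
      rw [Set.disjoint_left]
      rintro x ⟨w1, hw1, rfl⟩ ⟨w2, hw2, hx⟩
      refine h_sep i j hij ?_
      have hx' : a j * w2 = a i * w1 := hx
      have heq : a j = a i * (w1 * w2⁻¹) := by
        rw [← mul_assoc, ← hx']; group
      rw [heq]
      exact ⟨w1 * w2⁻¹, hWW (Set.mul_mem_mul hw1 (Set.inv_mem_inv.mpr hw2)), rfl⟩
    rcases Nat.lt_or_ge m n with h | h
    · exact key m n h
    · have h' : n < m := lt_of_le_of_ne h fun e => hne (congrArg a e.symm)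
      exact (key n m h').symm
end

section
/- Let A be a left uniformly discrete subset of a topological group X. Then A is functionally bounded in X if and only if A is finite. -/
open Filter Topology Set Pointwise

lemma exists_bump_tg {X : Type*} [Group X] [TopologicalSpace X] [IsTopologicalGroup X]
    {U : Set X} (hU : U ∈ 𝓝 (1 : X)) :
    ∃ φ : X → ℝ, Continuous φ ∧ φ 1 = 1 ∧ (∀ x, 0 ≤ φ x) ∧ ∀ x, x ∉ U → φ x = 0 := by
  classical
  -- a "halving" operation on neighborhoods of 1
  have key : ∀ S : Set X, S ∈ 𝓝 (1 : X) →
      ∃ T : Set X, T ∈ 𝓝 (1 : X) ∧ T⁻¹ = T ∧ T * T ⊆ S := by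
    intro S hS
    obtain ⟨T₀, hT₀, hmul⟩ := exists_nhds_one_split hS
    refine ⟨T₀ ∩ T₀⁻¹, Filter.inter_mem hT₀ (inv_mem_nhds_one X hT₀), ?_, ?_⟩
    · rw [Set.inter_inv, inv_inv, Set.inter_comm]
    · rintro z ⟨u, ⟨hu, -⟩, v, ⟨hv, -⟩, rfl⟩
      exact hmul u hu v hv
  choose! next hnext1 hnext2 hnext3 using key
  set V : ℕ → Set X := fun n => next^[n + 1] U with hV
  have hVsucc : ∀ n, V (n + 1) = next (V n) := by
    intro n
    simp only [hV, Function.iterate_succ_apply']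
  have hV0 : V 0 = next U := by simp [hV]
  have hVnhds : ∀ n, V n ∈ 𝓝 (1 : X) := by
    intro n
    induction n with
    | zero => rw [hV0]; exact hnext1 U hU
    | succ n ih => rw [hVsucc]; exact hnext1 _ ih
  have hVsymm : ∀ n, (V n)⁻¹ = V n := by
    intro n
    cases n with
    | zero => rw [hV0]; exact hnext2 U hU
    | succ n => rw [hVsucc]; exact hnext2 _ (hVnhds n)
  have hVmul : ∀ n, V (n + 1) * V (n + 1) ⊆ V n := by
    intro n; rw [hVsucc]; exact hnext3 _ (hVnhds n)
  have hV0U : V 0 ⊆ U := by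
    intro x hx
    have h1 : (1 : X) ∈ V 0 := mem_of_mem_nhds (hVnhds 0)
    have : (1 : X) * x ∈ U := hnext3 U hU (Set.mul_mem_mul h1 hx)
    simpa using this
  have hVanti : ∀ n, V (n + 1) ⊆ V n := by
    intro n x hx
    have h1 : (1 : X) ∈ V (n + 1) := mem_of_mem_nhds (hVnhds (n + 1))
    have := hVmul n (Set.mul_mem_mul h1 hx)
    simpa using this
  -- the entourages
  set D : ℕ → Set (X × X) := fun n => {p : X × X | p.1⁻¹ * p.2 ∈ V n} with hD
  have hDanti : Antitone D := by
    apply antitone_nat_of_succ_le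
    intro n p hp
    exact hVanti n hp
  set F : Filter (X × X) := ⨅ n, 𝓟 (D n) with hF
  have hbasis : F.HasBasis (fun _ : ℕ => True) D :=
    hasBasis_iInf_principal hDanti.directed_ge
  have hDmem : ∀ n, D n ∈ F := fun n => hbasis.mem_of_mem trivial
  have hFcg : F.IsCountablyGenerated := by
    rw [hF]; infer_instance
  -- the uniform structure
  set u : UniformSpace X := UniformSpace.ofCore (UniformSpace.Core.mk' F
    (by
      intro r hr x
      obtain ⟨n, -, hn⟩ := hbasis.mem_iff.1 hr
      exact hn (by simp [hD, mem_of_mem_nhds (hVnhds n)]))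
    (by
      intro r hr
      obtain ⟨n, -, hn⟩ := hbasis.mem_iff.1 hr
      refine Filter.mem_of_superset (hDmem n) ?_
      intro p hp
      apply hn
      have : (p.1⁻¹ * p.2)⁻¹ ∈ (V n)⁻¹ := Set.inv_mem_inv.2 hp
      rw [hVsymm] at this
      simpa [hD, mul_inv_rev] using this)
    (by
      intro r hr
      obtain ⟨n, -, hn⟩ := hbasis.mem_iff.1 hr
      refine ⟨D (n + 1), hDmem (n + 1), ?_⟩
      rintro ⟨x, z⟩ ⟨y, hxy, hyz⟩
      apply hn
      show x⁻¹ * z ∈ V n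
      have hm := hVmul n (Set.mul_mem_mul hxy hyz)
      simpa [mul_assoc] using hm)) with hu
  have hucg : @Filter.IsCountablyGenerated _ (@uniformity X u) := hFcg
  obtain ⟨m, hm⟩ := @UniformSpace.metrizable_uniformity X u hucg
  set d : X → X → ℝ := fun x y => @dist X m.toDist x y with hd
  have huF : ∀ _ : Unit, (@uniformity X m.toUniformSpace) = F := by
    intro _
    rw [hm]
    rfl
  clear hm hucg
  clear hu
  clear u
  have hsmall : ∃ ε : ℝ, 0 < ε ∧ ∀ y : X, d 1 y < ε → y ∈ V 0 := by
    letI := m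
    have hD0 : D 0 ∈ uniformity X := by
      rw [show (uniformity X) = F from huF ()]
      exact hDmem 0
    obtain ⟨ε, hε, h⟩ := Metric.mem_uniformity_dist.1 hD0
    refine ⟨ε, hε, fun y hy => ?_⟩
    have := h (show dist (1 : X) y < ε from hy)
    simpa [hD] using this
  have hlarge : ∀ ε : ℝ, 0 < ε → ∃ n, ∀ x y : X, (x, y) ∈ D n → d x y < ε := by
    letI := m
    intro ε hε
    have hmem : {p : X × X | dist p.1 p.2 < ε} ∈ uniformity X := Metric.dist_mem_uniformity hε
    rw [show (uniformity X) = F from huF ()] at hmem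
    obtain ⟨n, -, hn⟩ := hbasis.mem_iff.1 hmem
    exact ⟨n, fun x y hxy => hn hxy⟩
  have hg_lip : ∀ x y : X, |d 1 y - d 1 x| ≤ d x y := by
    letI := m
    intro x y
    rw [abs_sub_le_iff]
    constructor
    · have := dist_triangle (1 : X) x y
      show dist (1 : X) y - dist (1 : X) x ≤ dist x y
      linarith
    · have := dist_triangle (1 : X) y x
      have h2 : dist y x = dist x y := dist_comm y x
      show dist (1 : X) x - dist (1 : X) y ≤ dist x y
      linarith
  have hgcont : Continuous (fun x => d 1 x) := by
    rw [continuous_iff_continuousAt]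
    intro x
    rw [ContinuousAt, Metric.tendsto_nhds]
    intro ε hε
    obtain ⟨n, hn⟩ := hlarge ε hε
    have hxV : x • V n ∈ 𝓝 x := by
      have heq : x • V n = (fun y => x⁻¹ * y) ⁻¹' V n := by
        ext y
        simp [Set.mem_smul_set_iff_inv_smul_mem, smul_eq_mul]
      rw [heq]
      exact (continuous_const.mul continuous_id).continuousAt.preimage_mem_nhds
        (by simpa using hVnhds n)
    filter_upwards [hxV] with y hy
    have hxy : (x, y) ∈ D n := by
      rw [Set.mem_smul_set_iff_inv_smul_mem] at hy
      simpa [hD, smul_eq_mul] using hy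
    calc dist (d 1 y) (d 1 x) = |d 1 y - d 1 x| := Real.dist_eq _ _
      _ ≤ d x y := hg_lip x y
      _ < ε := hn x y hxy
  obtain ⟨ε, hε, hball⟩ := hsmall
  refine ⟨fun x => max 0 (1 - d 1 x / ε), continuous_const.max
    (continuous_const.sub (hgcont.div_const ε)), ?_, fun x => le_max_left _ _, ?_⟩
  · have h11 : d 1 1 = 0 := m.dist_self 1
    show max 0 (1 - d 1 1 / ε) = 1
    rw [h11]
    norm_num
  · intro x hx
    have hxV0 : x ∉ V 0 := fun h => hx (hV0U h)
    have hge : ε ≤ d 1 x := by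
      by_contra h
      exact hxV0 (hball x (lt_of_not_ge h))
    have : 1 - d 1 x / ε ≤ 0 := by
      rw [sub_nonpos]
      exact (one_le_div hε).2 hge
    exact max_eq_left this

/-- A subset `E` of a topological space `Y` is functionally bounded in `Y` if every
continuous real-valued function on `Y` is bounded on `E`. -/
def FunctionallyBounded {Y : Type*} [TopologicalSpace Y] (E : Set Y) : Prop :=
  ∀ f : Y → ℝ, Continuous f → Bornology.IsBounded (f '' E)

/-- Let `A` be a left uniformly discrete subset of a topological group `X`, i.e. `A` is left
`U`-separated (`aU ∩ bU = ∅` for all distinct `a, b ∈ A`) for some neighborhood `U` of the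
identity. Then `A` is functionally bounded in `X` if and only if `A` is finite. -/
theorem functionallyBounded_iff_finite_of_uniformly_discrete {X : Type*} [Group X]
    [TopologicalSpace X] [IsTopologicalGroup X] (A U : Set X) (hU : U ∈ 𝓝 (1 : X))
    (hsep : ∀ a ∈ A, ∀ b ∈ A, a ≠ b → Disjoint (a • U) (b • U)) :
    FunctionallyBounded A ↔ A.Finite := by
  constructor
  · intro hFB
    by_contra hfin
    have hinf : A.Infinite := hfin
    -- a symmetric neighborhood `W` of `1` with `W * W ⊆ U`
    obtain ⟨W, hW, hWsymm, hWU⟩ : ∃ W ∈ 𝓝 (1 : X), W⁻¹ = W ∧ W * W ⊆ U := by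
      obtain ⟨T₀, hT₀, hmul⟩ := exists_nhds_one_split hU
      refine ⟨T₀ ∩ T₀⁻¹, Filter.inter_mem hT₀ (inv_mem_nhds_one X hT₀), ?_, ?_⟩
      · rw [Set.inter_inv, inv_inv, Set.inter_comm]
      · rintro z ⟨u, ⟨hu, -⟩, v, ⟨hv, -⟩, rfl⟩
        exact hmul u hu v hv
    have h1W : (1 : X) ∈ W := mem_of_mem_nhds hW
    have hWsubU : W ⊆ U := by
      intro x hx
      have := hWU (Set.mul_mem_mul h1W hx)
      simpa using this
    obtain ⟨φ, hφcont, hφ1, hφnonneg, hφ0⟩ := exists_bump_tg hW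
    -- a sequence of distinct points of `A`
    obtain ⟨e⟩ : Nonempty (ℕ ↪ A) := ⟨hinf.natEmbedding⟩
    set a : ℕ → X := fun n => (e n : X) with ha
    have ha_mem : ∀ n, a n ∈ A := fun n => (e n).2
    have ha_inj : Function.Injective a := fun m n h => e.injective (Subtype.ext h)
    have hdisj : ∀ m n : ℕ, m ≠ n → Disjoint (a m • U) (a n • U) := fun m n hmn =>
      hsep _ (ha_mem m) _ (ha_mem n) (fun h => hmn (ha_inj h))
    -- support of each bump
    have hsupp : ∀ (n : ℕ) (x : X), φ ((a n)⁻¹ * x) ≠ 0 → x ∈ a n • W := by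
      intro n x h
      have : (a n)⁻¹ * x ∈ W := by
        by_contra hx
        exact h (hφ0 _ hx)
      rw [Set.mem_smul_set_iff_inv_smul_mem]
      simpa [smul_eq_mul] using this
    set F : X → ℝ := fun x => ∑' n : ℕ, (n : ℝ) * φ ((a n)⁻¹ * x) with hFdef
    -- at most one translate `a n • W` meets a given translate `x • W`
    have huniq : ∀ x : X, ∀ m n : ℕ, ((x • W) ∩ (a m • W)).Nonempty →
        ((x • W) ∩ (a n • W)).Nonempty → m = n := by
      rintro x m n ⟨y, hyx, hym⟩ ⟨z, hzx, hzn⟩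
      by_contra hmn
      have hxU : ∀ (k : ℕ) (y : X), y ∈ x • W → y ∈ a k • W → x ∈ a k • U := by
        rintro k y ⟨w1, hw1, rfl⟩ ⟨w2, hw2, hyk⟩
        have hw1' : w1⁻¹ ∈ W := by
          rw [← hWsymm]
          exact Set.inv_mem_inv.2 hw1
        refine ⟨w2 * w1⁻¹, hWU (Set.mul_mem_mul hw2 hw1'), ?_⟩
        simp only [smul_eq_mul] at hyk ⊢
        rw [← mul_assoc, hyk]
        simp
      exact Set.disjoint_left.1 (hdisj m n hmn) (hxU m y hyx hym) (hxU n z hzx hzn)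
    have hxWnhds : ∀ x : X, x • W ∈ 𝓝 x := by
      intro x
      have heq : x • W = (fun y => x⁻¹ * y) ⁻¹' W := by
        ext y
        simp [Set.mem_smul_set_iff_inv_smul_mem, smul_eq_mul]
      rw [heq]
      exact (continuous_const.mul continuous_id).continuousAt.preimage_mem_nhds
        (by simpa using hW)
    have hcont : Continuous F := by
      rw [continuous_iff_continuousAt]
      intro x
      by_cases hex : ∃ n : ℕ, ((x • W) ∩ (a n • W)).Nonempty
      · obtain ⟨n₀, hn₀⟩ := hex
        have hloc : ∀ y ∈ x • W, F y = (n₀ : ℝ) * φ ((a n₀)⁻¹ * y) := by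
          intro y hy
          apply tsum_eq_single
          intro n hn
          by_cases hz : φ ((a n)⁻¹ * y) = 0
          · rw [hz, mul_zero]
          · exact absurd (huniq x n n₀ ⟨y, hy, hsupp n y hz⟩ hn₀) hn
        have hg : ContinuousAt (fun y => (n₀ : ℝ) * φ ((a n₀)⁻¹ * y)) x :=
          (continuous_const.mul (hφcont.comp (continuous_const.mul continuous_id))).continuousAt
        exact hg.congr (Filter.eventuallyEq_of_mem (hxWnhds x) fun y hy => (hloc y hy).symm)
      · have hloc : ∀ y ∈ x • W, F y = 0 := by
          intro y hy
          have hz : ∀ n : ℕ, (n : ℝ) * φ ((a n)⁻¹ * y) = 0 := by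
            intro n
            by_cases hz : φ ((a n)⁻¹ * y) = 0
            · rw [hz, mul_zero]
            · exact absurd ⟨n, y, hy, hsupp n y hz⟩ hex
          calc F y = ∑' _ : ℕ, (0 : ℝ) := tsum_congr hz
            _ = 0 := tsum_zero
        exact continuousAt_const.congr
          (Filter.eventuallyEq_of_mem (hxWnhds x) fun y hy => (hloc y hy).symm)
    have hval : ∀ k : ℕ, F (a k) = k := by
      intro k
      have hself : a k ∈ a k • W := ⟨1, h1W, by simp⟩
      have hstep : F (a k) = (k : ℝ) * φ ((a k)⁻¹ * a k) := by
        apply tsum_eq_single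
        intro n hn
        by_cases hz : φ ((a n)⁻¹ * a k) = 0
        · rw [hz, mul_zero]
        · exact absurd
            (Set.disjoint_left.1 (hdisj n k hn)
              (Set.smul_set_mono hWsubU (hsupp n (a k) hz))
              (Set.smul_set_mono hWsubU hself)) id
      rw [hstep, inv_mul_cancel, hφ1, mul_one]
    have hb := hFB F hcont
    rw [isBounded_iff_forall_norm_le] at hb
    obtain ⟨C, hC⟩ := hb
    obtain ⟨k, hk⟩ := exists_nat_gt C
    have := hC (F (a k)) ⟨a k, ha_mem k, rfl⟩
    rw [hval k] at this
    rw [Real.norm_natCast] at this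
    linarith
  · intro hfin f hf
    exact (hfin.image f).isBounded
end

section
/- Every functionally bounded subset E of a topological group X is precompact, i.e., totally bounded: for every neighborhood U of the identity there exists a finite subset F of X with E ⊆ F·U and E ⊆ U·F. -/
open Filter Topology Set Pointwise
open scoped NNReal

lemma fb_aux_left {X : Type*} [Group X] [TopologicalSpace X]
    [IsTopologicalGroup X] (E : Set X) (hE : FunctionallyBounded E) :
    ∀ U ∈ 𝓝 (1 : X), ∃ F : Finset X, E ⊆ ↑F * U := by
  classical
  intro U hU
  by_contra hcon
  push_neg at hcon
  -- Step 1: a chain of symmetric neighborhoods of 1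
  have key : ∀ W : Set X, ∃ V : Set X, V ∈ 𝓝 (1 : X) ∧ V⁻¹ = V ∧
      (W ∈ 𝓝 (1 : X) → V * V * V ⊆ W) := by
    intro W
    by_cases hW : W ∈ 𝓝 (1 : X)
    · obtain ⟨V₁, hV₁, hV₁m⟩ := exists_nhds_one_split hW
      obtain ⟨V₂, hV₂, hV₂m⟩ := exists_nhds_one_split hV₁
      have h1V₂ : (1 : X) ∈ V₂ := mem_of_mem_nhds hV₂
      have hV₂₁ : V₂ ⊆ V₁ := fun a ha => by simpa using hV₂m a ha 1 h1V₂
      refine ⟨V₂ ∩ V₂⁻¹, Filter.inter_mem hV₂ (inv_mem_nhds_one X hV₂), ?_, ?_⟩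
      · simp [Set.inter_comm]
      · intro _
        rintro z hz
        rw [mul_assoc] at hz
        obtain ⟨a, ha, bc, hbc, rfl⟩ := hz
        obtain ⟨b, hb, c, hc, rfl⟩ := hbc
        exact hV₁m a (hV₂₁ ha.1) (b * c) (hV₂m b hb.1 c hc.1)
    · exact ⟨Set.univ, Filter.univ_mem, Set.inv_univ, fun h => absurd h hW⟩
  choose g hg1 hg2 hg3 using key
  set V : ℕ → Set X := fun n => Nat.rec (g U) (fun _ Vn => g Vn) n with hVdef
  have hVnhds : ∀ n, V n ∈ 𝓝 (1 : X) := by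
    intro n; cases n with
    | zero => exact hg1 U
    | succ n => exact hg1 _
  have hone : ∀ n, (1 : X) ∈ V n := fun n => mem_of_mem_nhds (hVnhds n)
  have hVsym : ∀ n, (V n)⁻¹ = V n := by
    intro n; cases n with
    | zero => exact hg2 U
    | succ n => exact hg2 _
  have hVcube : ∀ n, V (n + 1) * V (n + 1) * V (n + 1) ⊆ V n := fun n => hg3 (V n) (hVnhds n)
  have hV0U : V 0 * V 0 * V 0 ⊆ U := hg3 U hU
  have hV0 : V 0 ⊆ U := fun a ha => by
    have := hV0U (Set.mul_mem_mul (Set.mul_mem_mul ha (hone 0)) (hone 0))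
    simpa using this
  have hVanti : Antitone V := by
    apply antitone_nat_of_succ_le
    intro n a ha
    have := hVcube n (Set.mul_mem_mul (Set.mul_mem_mul ha (hone (n+1))) (hone (n+1)))
    simpa using this
  have hVinvmem : ∀ n (z : X), z ∈ V n → z⁻¹ ∈ V n := by
    intro n z hz
    rw [← hVsym n]
    exact Set.inv_mem_inv.mpr hz
  -- Step 2: premetric
  set d : X → X → ℝ≥0 := fun x y =>
    if h : ∃ n, x⁻¹ * y ∉ V n then 2 * (2⁻¹ : ℝ≥0) ^ (Nat.find h) else 0 with hd
  have hiff : ∀ (x y : X) (n : ℕ), x⁻¹ * y ∈ V n ↔ y⁻¹ * x ∈ V n := by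
    intro x y n
    constructor
    · intro h; have := hVinvmem n _ h; simpa using this
    · intro h; have := hVinvmem n _ h; simpa using this
  have d_self : ∀ x, d x x = 0 := by
    intro x
    rw [hd]
    simp only
    rw [dif_neg]
    push_neg
    intro n
    simpa using hone n
  have d_comm : ∀ x y, d x y = d y x := by
    intro x y
    rw [hd]
    simp only
    by_cases h : ∃ n, x⁻¹ * y ∉ V n
    · have h' : ∃ n, y⁻¹ * x ∉ V n := ⟨h.choose, fun hc => h.choose_spec ((hiff x y _).mpr hc)⟩
      rw [dif_pos h, dif_pos h']
      have : Nat.find h = Nat.find h' := by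
        congr 1
        · ext n; rw [not_iff_not]; exact hiff x y n
      rw [this]
    · have h' : ¬ ∃ n, y⁻¹ * x ∉ V n := by
        push_neg at h ⊢
        intro n; exact (hiff x y n).mp (h n)
      rw [dif_neg h, dif_neg h']
  have hhalf : (2⁻¹ : ℝ≥0) < 1 := by rw [← NNReal.coe_lt_coe]; norm_num
  have hhalfpos : (0 : ℝ≥0) < 2⁻¹ := by rw [← NNReal.coe_lt_coe]; norm_num
  have hpow2 : ∀ j : ℕ, 2 * (2⁻¹ : ℝ≥0) ^ (j + 1) = (2⁻¹ : ℝ≥0) ^ j := by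
    intro j
    rw [pow_succ, mul_comm, mul_assoc, inv_mul_cancel₀ two_ne_zero, mul_one]
  have hpowanti : StrictAnti (fun k : ℕ => (2⁻¹ : ℝ≥0) ^ k) := fun i j hij =>
    pow_lt_pow_right_of_lt_one₀ hhalfpos hhalf hij
  have d_le_two : ∀ x y, d x y ≤ 2 := by
    intro x y
    rw [hd]; simp only
    split
    · calc 2 * (2⁻¹ : ℝ≥0) ^ _ ≤ 2 * 1 := by
            gcongr
            exact pow_le_one₀ (zero_le) (by norm_num)
        _ = 2 := mul_one 2
    · exact zero_le
  have d_le_iff : ∀ (x y : X) (n : ℕ), d x y ≤ (2⁻¹ : ℝ≥0) ^ n ↔ x⁻¹ * y ∈ V n := by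
    intro x y n
    rw [hd]; simp only
    by_cases h : ∃ m, x⁻¹ * y ∉ V m
    · rw [dif_pos h]
      have h2 : 2 * (2⁻¹ : ℝ≥0) ^ (Nat.find h) ≤ (2⁻¹ : ℝ≥0) ^ n ↔ n < Nat.find h := by
        have : 2 * (2⁻¹ : ℝ≥0) ^ (Nat.find h) ≤ (2⁻¹ : ℝ≥0) ^ n
            ↔ (2⁻¹ : ℝ≥0) ^ (Nat.find h) ≤ (2⁻¹ : ℝ≥0) ^ (n + 1) := by
          constructor
          · intro hle
            have h2 := mul_le_mul_right hle (2⁻¹ : ℝ≥0)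
            rw [← mul_assoc, inv_mul_cancel₀ two_ne_zero, one_mul] at h2
            calc (2⁻¹ : ℝ≥0) ^ (Nat.find h) ≤ 2⁻¹ * (2⁻¹ : ℝ≥0) ^ n := h2
              _ = (2⁻¹ : ℝ≥0) ^ (n + 1) := (pow_succ' _ _).symm
          · intro hle
            have h2 := mul_le_mul_right hle (2 : ℝ≥0)
            rwa [hpow2 n] at h2
        rw [this, hpowanti.le_iff_ge, Nat.succ_le_iff]
      rw [h2, Nat.lt_find_iff]
      constructor
      · intro hall
        have := hall n le_rfl
        simpa using this
      · intro hmem m hm hnot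
        exact hnot (hVanti hm hmem)
    · rw [dif_neg h]
      push_neg at h
      simp [h n, zero_le]
  -- the triangle-like inequality
  have chainC : ∀ (a b c e : X) (k : ℕ), d a b ≤ (2⁻¹ : ℝ≥0) ^ k → d b c ≤ (2⁻¹ : ℝ≥0) ^ k →
      d c e ≤ (2⁻¹ : ℝ≥0) ^ k → d a e ≤ 2 * (2⁻¹ : ℝ≥0) ^ k := by
    intro a b c e k h1 h2 h3
    cases k with
    | zero =>
      simpa using (d_le_two a e)
    | succ j =>
      have m1 := (d_le_iff a b _).mp h1
      have m2 := (d_le_iff b c _).mp h2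
      have m3 := (d_le_iff c e _).mp h3
      have : a⁻¹ * e ∈ V j := by
        have : (a⁻¹ * b) * (b⁻¹ * c) * (c⁻¹ * e) ∈ V (j+1) * V (j+1) * V (j+1) :=
          Set.mul_mem_mul (Set.mul_mem_mul m1 m2) m3
        have h4 := hVcube j this
        simpa [mul_assoc] using h4
      have := (d_le_iff a e j).mpr this
      calc d a e ≤ (2⁻¹ : ℝ≥0) ^ j := this
        _ = 2 * (2⁻¹ : ℝ≥0) ^ (j + 1) := (hpow2 j).symm
  have hd4 : ∀ x₁ x₂ x₃ x₄, d x₁ x₄ ≤ 2 * max (d x₁ x₂) (max (d x₂ x₃) (d x₃ x₄)) := by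
    intro x₁ x₂ x₃ x₄
    set M := max (d x₁ x₂) (max (d x₂ x₃) (d x₃ x₄)) with hM
    have hb1 : d x₁ x₂ ≤ M := le_max_left _ _
    have hb2 : d x₂ x₃ ≤ M := le_trans (le_max_left _ _) (le_max_right _ _)
    have hb3 : d x₃ x₄ ≤ M := le_trans (le_max_right _ _) (le_max_right _ _)
    by_cases hM0 : M = 0
    · have hzero : d x₁ x₄ = 0 := by
        have hle : ∀ k : ℕ, d x₁ x₄ ≤ 2 * (2⁻¹ : ℝ≥0) ^ k := fun k =>
          chainC _ _ _ _ k (le_trans hb1 (by rw [hM0]; exact zero_le))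
            (le_trans hb2 (by rw [hM0]; exact zero_le))
            (le_trans hb3 (by rw [hM0]; exact zero_le))
        have htend : Filter.Tendsto (fun k : ℕ => 2 * (2⁻¹ : ℝ≥0) ^ k) Filter.atTop (𝓝 0) := by
          have := NNReal.tendsto_pow_atTop_nhds_zero_of_lt_one hhalf
          simpa using this.const_mul (2 : ℝ≥0)
        exact le_antisymm (ge_of_tendsto' htend hle) (zero_le)
      rw [hzero]; exact zero_le
    · -- M is attained and is of the form 2 * 2⁻¹ ^ k
      have hMform : ∃ k : ℕ, M = 2 * (2⁻¹ : ℝ≥0) ^ k := by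
        have : M = d x₁ x₂ ∨ M = d x₂ x₃ ∨ M = d x₃ x₄ := by
          rcases max_choice (d x₁ x₂) (max (d x₂ x₃) (d x₃ x₄)) with h | h
          · exact Or.inl h
          · rcases max_choice (d x₂ x₃) (d x₃ x₄) with h' | h'
            · exact Or.inr (Or.inl (h.trans h'))
            · exact Or.inr (Or.inr (h.trans h'))
        have hform : ∀ (a b : X), d a b ≠ 0 → ∃ k : ℕ, d a b = 2 * (2⁻¹ : ℝ≥0) ^ k := by
          intro a b hab
          rw [hd] at hab ⊢
          simp only at hab ⊢
          by_cases hh : ∃ n, a⁻¹ * b ∉ V n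
          · exact ⟨Nat.find hh, by rw [dif_pos hh]⟩
          · exact absurd (dif_neg hh) hab
        rcases this with h | h | h
        · exact h ▸ hform _ _ (h ▸ hM0)
        · exact h ▸ hform _ _ (h ▸ hM0)
        · exact h ▸ hform _ _ (h ▸ hM0)
      obtain ⟨k, hk⟩ := hMform
      cases k with
      | zero =>
        calc d x₁ x₄ ≤ 2 := d_le_two _ _
          _ ≤ 2 * M := by rw [hk]; norm_num
      | succ j =>
        have hMj : M ≤ (2⁻¹ : ℝ≥0) ^ j := by
          rw [hk]; exact le_of_eq (hpow2 j)
        have := chainC x₁ x₂ x₃ x₄ j (hb1.trans hMj) (hb2.trans hMj) (hb3.trans hMj)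
        calc d x₁ x₄ ≤ 2 * (2⁻¹ : ℝ≥0) ^ j := this
          _ = 2 * M := by rw [hk, hpow2 j]
  -- Step 3: the pseudometric
  set I : PseudoMetricSpace X := PseudoMetricSpace.ofPreNNDist d d_self d_comm with hI
  set ρ : X → X → ℝ := @dist X I.toDist with hρ
  have hρle : ∀ a b : X, ρ a b ≤ (d a b : ℝ) :=
    PseudoMetricSpace.dist_ofPreNNDist_le d d_self d_comm
  have hρ2 : ∀ a b : X, (d a b : ℝ) ≤ 2 * ρ a b :=
    PseudoMetricSpace.le_two_mul_dist_ofPreNNDist d d_self d_comm hd4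
  have hρ0 : ∀ a b : X, 0 ≤ ρ a b := fun a b => by
    have h1 : (0 : ℝ) ≤ (d a b : ℝ) := (d a b).coe_nonneg
    have h2 := hρ2 a b
    linarith
  have hρself : ∀ a : X, ρ a a = 0 := I.dist_self
  have hρcomm : ∀ a b : X, ρ a b = ρ b a := I.dist_comm
  have hρtri : ∀ a b c : X, ρ a c ≤ ρ a b + ρ b c := I.dist_triangle
  have hsmall : ∀ (n : ℕ) (a b : X), a⁻¹ * b ∈ V n → ρ a b ≤ (2⁻¹ : ℝ) ^ n := by
    intro n a b hab
    have h1 := (d_le_iff a b n).mpr hab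
    have h2 : (d a b : ℝ) ≤ ((2⁻¹ : ℝ≥0) ^ n : ℝ≥0) := by exact_mod_cast h1
    calc ρ a b ≤ (d a b : ℝ) := hρle a b
      _ ≤ (((2⁻¹ : ℝ≥0) ^ n : ℝ≥0) : ℝ) := h2
      _ = (2⁻¹ : ℝ) ^ n := by push_cast; ring
  -- continuity of distances in the original topology
  have hcontdist : ∀ b : X, Continuous fun y => ρ b y := by
    intro b
    rw [continuous_iff_continuousAt]
    intro a
    rw [ContinuousAt, Metric.tendsto_nhds]
    intro ε hε
    obtain ⟨n, hn⟩ : ∃ n : ℕ, (2⁻¹ : ℝ) ^ n < ε := exists_pow_lt_of_lt_one hε (by norm_num)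
    have hca : ContinuousAt (fun z => a⁻¹ * z) a := (continuous_const.mul continuous_id).continuousAt
    have hmem : (fun z => a⁻¹ * z) ⁻¹' V n ∈ 𝓝 a := by
      apply hca.preimage_mem_nhds
      rw [inv_mul_cancel]
      exact hVnhds n
    filter_upwards [hmem] with z hz
    have h1 : ρ a z ≤ (2⁻¹ : ℝ) ^ n := hsmall n a z hz
    have h2 : ρ b z ≤ ρ b a + ρ a z := hρtri b a z
    have h3 : ρ b a ≤ ρ b z + ρ a z := by
      have := hρtri b z a
      rw [hρcomm z a] at this
      linarith
    rw [Real.dist_eq, abs_lt]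
    constructor <;> [linarith [hρ0 a z]; linarith [hρ0 a z]]
  -- Step 4: the sequence
  have hc : ∀ F : Finset X, ∃ z, z ∈ E ∧ z ∉ (↑F : Set X) * U := by
    intro F
    rcases Set.not_subset.mp (hcon F) with ⟨z, hz1, hz2⟩
    exact ⟨z, hz1, hz2⟩
  choose c hcE hcU using hc
  set Fs : ℕ → Finset X := fun n => Nat.rec ∅ (fun _ F => insert (c F) F) n with hFsdef
  set x : ℕ → X := fun n => c (Fs n) with hx
  have hxE : ∀ n, x n ∈ E := fun n => hcE _
  have hFsucc : ∀ n, Fs (n + 1) = insert (x n) (Fs n) := fun n => rfl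
  have hFsmono : ∀ m n, m ≤ n → Fs m ⊆ Fs n := by
    intro m n hmn
    induction hmn with
    | refl => exact Finset.Subset.refl _
    | step _ ih => exact fun a ha => by rw [hFsucc]; exact Finset.mem_insert_of_mem (ih ha)
  have hxFs : ∀ n m, n < m → x n ∈ Fs m := by
    intro n m hnm
    exact hFsmono (n + 1) m hnm (by rw [hFsucc]; exact Finset.mem_insert_self _ _)
  have hxs : ∀ n m, n < m → (x n)⁻¹ * x m ∉ U := by
    intro n m hnm hmem
    apply hcU (Fs m)
    refine ⟨x n, by exact_mod_cast hxFs n m hnm, (x n)⁻¹ * x m, hmem, ?_⟩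
    simp
    rfl
  have hd2 : ∀ n m, n ≠ m → d (x n) (x m) = 2 := by
    have haux : ∀ n m, n < m → d (x n) (x m) = 2 := by
      intro n m hnm
      have hnotin : (x n)⁻¹ * x m ∉ V 0 := fun hc' => hxs n m hnm (hV0 hc')
      have hex : ∃ k, (x n)⁻¹ * x m ∉ V k := ⟨0, hnotin⟩
      rw [hd]
      simp only
      rw [dif_pos hex]
      have : Nat.find hex = 0 := Nat.find_eq_zero hex |>.mpr hnotin
      rw [this, pow_zero, mul_one]
    intro n m hnm
    rcases lt_or_gt_of_ne hnm with h | h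
    · exact haux n m h
    · rw [d_comm]; exact haux m n h
  have hsep : ∀ n m, n ≠ m → 1 ≤ ρ (x n) (x m) := by
    intro n m hnm
    have h1 := hρ2 (x n) (x m)
    rw [hd2 n m hnm] at h1
    norm_num at h1
    linarith
  -- Step 5: the unbounded continuous function
  set gg : ℕ → X → ℝ := fun n y => (n : ℝ) * max 0 (1 - 4 * ρ (x n) y) with hgg
  have hggcont : ∀ n, Continuous (gg n) :=
    fun n => continuous_const.mul (continuous_const.max
      (continuous_const.sub (continuous_const.mul (hcontdist (x n)))))
  have hggsupp : ∀ n y, gg n y ≠ 0 → ρ (x n) y < 4⁻¹ := by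
    intro n y hne
    by_contra hge
    push_neg at hge
    apply hne
    rw [hgg]
    simp only
    have : 1 - 4 * ρ (x n) y ≤ 0 := by linarith
    rw [max_eq_left this, mul_zero]
  set f : X → ℝ := fun y => ∑' n, gg n y with hf
  have hfx : ∀ N, f (x N) = N := by
    intro N
    rw [hf]
    simp only
    have h0 : ∀ n, n ≠ N → gg n (x N) = 0 := by
      intro n hn
      have hge : 1 ≤ ρ (x n) (x N) := hsep n N hn
      rw [hgg]
      simp only
      rw [max_eq_left (by linarith), mul_zero]
    rw [tsum_eq_single N h0, hgg]
    simp only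
    rw [hρself (x N)]
    norm_num
  have hfc : Continuous f := by
    rw [continuous_iff_continuousAt]
    intro a
    have hca : ContinuousAt (fun z => a⁻¹ * z) a := (continuous_const.mul continuous_id).continuousAt
    have hSmem : (fun z => a⁻¹ * z) ⁻¹' V 4 ∈ 𝓝 a := by
      apply hca.preimage_mem_nhds
      rw [inv_mul_cancel]
      exact hVnhds 4
    set S := (fun z => a⁻¹ * z) ⁻¹' V 4 with hS
    have hSρ : ∀ z ∈ S, ρ a z ≤ (2⁻¹ : ℝ) ^ 4 := fun z hz => hsmall 4 a z hz
    have hpow4 : ((2 : ℝ)⁻¹) ^ 4 = 1 / 16 := by norm_num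
    obtain ⟨N, hN⟩ : ∃ N, ∀ y ∈ S, ∀ n, n ≠ N → gg n y = 0 := by
      by_cases hex : ∃ y ∈ S, ∃ n, gg n y ≠ 0
      · obtain ⟨y₀, hy₀, n₀, hn₀⟩ := hex
        refine ⟨n₀, fun y hy n hn => ?_⟩
        by_contra hg
        have h1 := hggsupp n y hg
        have h2 := hggsupp n₀ y₀ hn₀
        have h3 := hSρ y hy
        have h4 := hSρ y₀ hy₀
        have h5 := hsep n n₀ hn
        have t1 : ρ (x n) (x n₀) ≤ ρ (x n) y + ρ y (x n₀) := hρtri _ _ _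
        have t2 : ρ y (x n₀) ≤ ρ y a + ρ a (x n₀) := hρtri _ _ _
        have t3 : ρ a (x n₀) ≤ ρ a y₀ + ρ y₀ (x n₀) := hρtri _ _ _
        have e1 : ρ y a = ρ a y := hρcomm _ _
        have e2 : ρ y₀ (x n₀) = ρ (x n₀) y₀ := hρcomm _ _
        rw [hpow4] at h3 h4
        linarith
      · push_neg at hex
        exact ⟨0, fun y hy n _ => hex y hy n⟩
    have heq : ∀ y ∈ S, f y = gg N y := by
      intro y hy
      rw [hf]
      simp only
      exact tsum_eq_single N (fun n hn => hN y hy n hn)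
    have hev : f =ᶠ[𝓝 a] gg N := Filter.eventuallyEq_of_mem hSmem heq
    exact ((hggcont N).continuousAt).congr hev.symm
  -- Step 6: contradiction
  have hb := hE f hfc
  rw [isBounded_iff_forall_norm_le] at hb
  obtain ⟨C, hC⟩ := hb
  obtain ⟨n, hn⟩ := exists_nat_gt C
  have := hC (f (x n)) ⟨x n, hxE n, rfl⟩
  rw [hfx n] at this
  rw [Real.norm_natCast] at this
  linarith

/-- Every functionally bounded subset `E` of a topological group `X` is precompact, i.e.
totally bounded: for every neighborhood `U` of the identity there exists a finite subset `F`
of `X` with `E ⊆ F·U` and `E ⊆ U·F`. -/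
theorem precompact_of_functionallyBounded {X : Type*} [Group X] [TopologicalSpace X]
    [IsTopologicalGroup X] (E : Set X) (hE : FunctionallyBounded E) :
    ∀ U ∈ 𝓝 (1 : X), ∃ F : Finset X, E ⊆ ↑F * U ∧ E ⊆ U * ↑F := by
  classical
  intro U hU
  obtain ⟨F₁, hF₁⟩ := fb_aux_left E hE U hU
  have hEinv : FunctionallyBounded (E⁻¹ : Set X) := by
    intro f hf
    have h := hE (fun x => f x⁻¹) (hf.comp continuous_inv)
    have himg : (fun x => f x⁻¹) '' E = f '' (E⁻¹ : Set X) := by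
      rw [← Set.image_inv_eq_inv, Set.image_image]
    rwa [himg] at h
  obtain ⟨F₂, hF₂⟩ := fb_aux_left (E⁻¹) hEinv U⁻¹ (inv_mem_nhds_one X hU)
  have hF₂' : E ⊆ U * ↑(F₂⁻¹) := by
    intro z hz
    have hzinv : z⁻¹ ∈ (↑F₂ : Set X) * U⁻¹ := hF₂ (Set.inv_mem_inv.mpr hz)
    have : z ∈ ((↑F₂ : Set X) * U⁻¹)⁻¹ := by
      rw [Set.mem_inv]
      simpa using hzinv
    rw [mul_inv_rev, inv_inv] at this
    rwa [Finset.coe_inv]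
  refine ⟨F₁ ∪ F₂⁻¹, ?_, ?_⟩
  · intro z hz
    exact Set.mul_subset_mul_right (by simp : (↑F₁ : Set X) ⊆ ↑(F₁ ∪ F₂⁻¹)) (hF₁ hz)
  · intro z hz
    exact Set.mul_subset_mul_left (by simp : (↑(F₂⁻¹) : Set X) ⊆ ↑(F₁ ∪ F₂⁻¹)) (hF₂' hz)
end

section
/- Let E be a subset of a topological group X that is complete with respect to its two-sided (Raĭkov) uniformity. Then the following are equivalent: (i) E is functionally bounded in X; (ii) E is precompact (totally bounded); (iii) the closure of E in X is compact. -/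
open Filter Topology Set Pointwise

/-- A topological group is Raĭkov complete if every nontrivial filter that is Cauchy with
respect to the two-sided uniformity (i.e. for every neighborhood `V` of the identity it
contains a set `S` with `y * x⁻¹ ∈ V` and `x⁻¹ * y ∈ V` for all `x, y ∈ S`) converges. -/
def RaikovComplete (X : Type*) [Group X] [TopologicalSpace X] : Prop :=
  ∀ F : Filter X, F.NeBot →
    (∀ V ∈ 𝓝 (1 : X), ∃ S ∈ F, ∀ x ∈ S, ∀ y ∈ S, y * x⁻¹ ∈ V ∧ x⁻¹ * y ∈ V) →
    ∃ x : X, F ≤ 𝓝 x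

lemma aux_split {X : Type*} [Group X] [TopologicalSpace X] [IsTopologicalGroup X]
    {s : Set X} (hs : s ∈ 𝓝 (1 : X)) :
    ∃ t ∈ 𝓝 (1:X), (∀ x ∈ t, x⁻¹ ∈ t) ∧ ∀ a ∈ t, ∀ b ∈ t, a * b ∈ s := by
  obtain ⟨t₀, ht₀, h⟩ := exists_nhds_one_split hs
  refine ⟨t₀ ∩ t₀⁻¹, Filter.inter_mem ht₀ (inv_mem_nhds_one X ht₀), ?_, ?_⟩
  · rintro x ⟨hx1, hx2⟩
    exact ⟨Set.mem_inv.1 hx2, by simpa using hx1⟩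
  · rintro a ⟨ha, -⟩ b ⟨hb, -⟩
    exact h a ha b hb

lemma exists_bump {X : Type*} [Group X] [TopologicalSpace X] [IsTopologicalGroup X]
    {V : Set X} (hV : V ∈ 𝓝 (1 : X)) :
    ∃ g : X → ℝ, Continuous g ∧ g 1 = 1 ∧ (∀ x, 0 ≤ g x) ∧ ∀ x, x ∉ V → g x = 0 := by
  classical
  have key : ∀ s : Set X, s ∈ 𝓝 (1:X) →
      ∃ t : Set X, t ∈ 𝓝 (1:X) ∧ (∀ x ∈ t, x⁻¹ ∈ t) ∧ ∀ a ∈ t, ∀ b ∈ t, a * b ∈ s := by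
    intro s hs
    obtain ⟨t, ht, h1, h2⟩ := aux_split hs
    exact ⟨t, ht, h1, h2⟩
  choose! T hT₁ hT₂ hT₃ using key
  set W : ℕ → Set X := fun n => T^[n] (T V) with hW
  have hW0 : W 0 = T V := rfl
  have hWs : ∀ n, W (n + 1) = T (W n) := fun n => Function.iterate_succ_apply' T n (T V)
  have hmem : ∀ n, W n ∈ 𝓝 (1 : X) := by
    intro n; induction n with
    | zero => exact hT₁ V hV
    | succ n ih => rw [hWs]; exact hT₁ _ ih
  have hone : ∀ n, (1 : X) ∈ W n := fun n => mem_of_mem_nhds (hmem n)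
  have hsym : ∀ n, ∀ x ∈ W n, x⁻¹ ∈ W n := by
    intro n
    cases n with
    | zero => exact hT₂ V hV
    | succ n => rw [hWs]; exact hT₂ _ (hmem n)
  have hmul : ∀ n, ∀ a ∈ W (n+1), ∀ b ∈ W (n+1), a * b ∈ W n := by
    intro n; rw [hWs]; exact hT₃ _ (hmem n)
  have hsub : W 0 ⊆ V := by
    intro a ha
    have := hT₃ V hV a ha 1 (hone 0)
    simpa using this
  have hanti : Antitone W := by
    refine antitone_nat_of_succ_le fun n a ha => ?_
    simpa using hmul n a ha 1 (hone (n+1))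
  -- the left uniformity generated by the chain W
  set R : ℕ → Set (X × X) := fun n => {p : X × X | p.1⁻¹ * p.2 ∈ W n} with hR
  have hRanti : Antitone R := fun m n hmn p hp => hanti hmn hp
  have hRdir : Directed (· ≥ ·) R := fun m n =>
    ⟨max m n, hRanti (le_max_left m n), hRanti (le_max_right m n)⟩
  let core : UniformSpace.Core X :=
    { uniformity := ⨅ n, 𝓟 (R n)
      refl := le_iInf fun n => by
        rw [Filter.le_principal_iff]
        rintro ⟨a, b⟩ (h : a = b)
        show a⁻¹ * b ∈ W n
        rw [← h, inv_mul_cancel]; exact hone n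
      symm := by
        rw [Filter.tendsto_iInf]
        intro n
        refine Filter.Tendsto.mono_left ?_ (iInf_le _ n)
        rw [Filter.tendsto_principal_principal]
        rintro ⟨a, b⟩ hab
        show b⁻¹ * a ∈ W n
        have := hsym n _ hab
        simpa using this
      comp := by
        refine le_iInf fun n => ?_
        refine le_trans (Filter.lift'_mono (iInf_le _ (n+1)) le_rfl) ?_
        have hm : Monotone fun s : Set (X × X) => SetRel.comp s s := fun a b h p ⟨z, h1, h2⟩ => ⟨z, h h1, h h2⟩
        rw [Filter.lift'_principal hm]
        rw [Filter.le_principal_iff, Filter.mem_principal]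
        rintro ⟨a, b⟩ ⟨z, haz, hzb⟩
        show a⁻¹ * b ∈ W n
        have := hmul n _ haz _ hzb
        simpa [mul_assoc] using this }
  let u : UniformSpace X := UniformSpace.ofCore core
  have hcg : @Filter.IsCountablyGenerated (X × X) (@uniformity X u) :=
    Filter.isCountablyGenerated_seq R
  obtain ⟨I, hI⟩ := @UniformSpace.metrizable_uniformity X u hcg
  set d : X → X → ℝ := @dist X I.toDist with hd
  have hu : (⨅ n, 𝓟 (R n)) = ⨅ ε > 0, 𝓟 {p : X × X | d p.1 p.2 < ε} := by
    have h1 : @uniformity X I.toUniformSpace = @uniformity X u := by rw [hI]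
    rw [I.uniformity_dist] at h1
    exact h1.symm
  -- the basic estimates
  have hsmall : ∀ ε : ℝ, 0 < ε → ∃ n, ∀ p : X × X, p.1⁻¹ * p.2 ∈ W n → d p.1 p.2 < ε := by
    intro ε hε
    have hmem' : {p : X × X | d p.1 p.2 < ε} ∈ ⨅ n, 𝓟 (R n) := by
      rw [hu]
      exact mem_iInf_of_mem ε (mem_iInf_of_mem hε (Filter.mem_principal_self _))
    rw [(Filter.hasBasis_iInf_principal hRdir).mem_iff] at hmem'
    obtain ⟨n, hn⟩ := hmem'
    exact ⟨n, fun p hp => hn.2 hp⟩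
  have hδ : ∃ δ : ℝ, 0 < δ ∧ ∀ p : X × X, d p.1 p.2 < δ → p.1⁻¹ * p.2 ∈ W 0 := by
    have hmem' : R 0 ∈ ⨅ ε > 0, 𝓟 {p : X × X | d p.1 p.2 < ε} := by
      rw [← hu]
      exact mem_iInf_of_mem 0 (Filter.mem_principal_self _)
    have hdir : Directed (· ≥ ·) fun ε : {x : ℝ // 0 < x} =>
        𝓟 {p : X × X | d p.1 p.2 < (ε : ℝ)} := by
      rintro ⟨ε₁, h₁⟩ ⟨ε₂, h₂⟩
      refine ⟨⟨min ε₁ ε₂, lt_min h₁ h₂⟩, ?_, ?_⟩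
      · exact Filter.principal_mono.2 fun p hp =>
          show d p.1 p.2 < ε₁ from lt_of_lt_of_le hp (min_le_left _ _)
      · exact Filter.principal_mono.2 fun p hp =>
          show d p.1 p.2 < ε₂ from lt_of_lt_of_le hp (min_le_right _ _)
    rw [iInf_subtype'] at hmem'
    haveI : Nonempty {x : ℝ // 0 < x} := ⟨⟨1, one_pos⟩⟩
    rw [Filter.mem_iInf_of_directed hdir] at hmem'
    obtain ⟨⟨δ, hδpos⟩, hmem'⟩ := hmem'
    exact ⟨δ, hδpos, fun p hp => Filter.mem_principal.1 hmem' hp⟩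
  obtain ⟨δ, hδpos, hδ⟩ := hδ
  -- continuity of d 1 ·
  have hcont : Continuous fun y => d 1 y := by
    rw [continuous_iff_continuousAt]
    intro y₀
    rw [ContinuousAt, Metric.tendsto_nhds]
    intro ε hε
    obtain ⟨n, hn⟩ := hsmall ε hε
    have hc : Continuous fun z : X => y₀⁻¹ * z := continuous_const.mul continuous_id
    have hnb : (fun z : X => y₀⁻¹ * z) ⁻¹' (W n) ∈ 𝓝 y₀ := by
      apply ContinuousAt.preimage_mem_nhds hc.continuousAt
      have h1 : y₀⁻¹ * y₀ = 1 := inv_mul_cancel y₀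
      rw [h1]; exact hmem n
    filter_upwards [hnb] with z hz
    have hdz : d y₀ z < ε := hn (y₀, z) hz
    rw [Real.dist_eq]
    have h1 : d 1 z ≤ d 1 y₀ + d y₀ z := I.dist_triangle 1 y₀ z
    have h2 : d 1 y₀ ≤ d 1 z + d y₀ z := by
      have := I.dist_triangle 1 z y₀
      rwa [I.dist_comm z y₀] at this
    have habs : |d 1 z - d 1 y₀| ≤ d y₀ z := abs_sub_le_iff.2 ⟨by linarith, by linarith⟩
    exact habs.trans_lt hdz
  refine ⟨fun y => max 0 (1 - d 1 y / δ), ?_, ?_, fun x => le_max_left _ _, ?_⟩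
  · exact continuous_const.max (continuous_const.sub (hcont.div_const δ))
  · have : d 1 1 = 0 := I.dist_self 1
    simp [this]
  · intro y hy
    have hy0 : y ∉ W 0 := fun h => hy (hsub h)
    have : ¬ d 1 y < δ := by
      intro hlt
      exact hy0 (by simpa using hδ (1, y) hlt)
    push_neg at this
    have : (1:ℝ) ≤ d 1 y / δ := (one_le_div hδpos).2 this
    exact max_eq_left (by linarith)

lemma not_functionallyBounded_left {X : Type*} [Group X] [TopologicalSpace X]
    [IsTopologicalGroup X] {E U : Set X} (hU : U ∈ 𝓝 (1 : X))
    (h : ∀ F : Finset X, ¬ E ⊆ ↑F * U) : ¬ FunctionallyBounded E := by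
  classical
  obtain ⟨A, hA, hAsym, hA2⟩ := aux_split hU
  obtain ⟨V, hV, hVsym, hV2⟩ := aux_split hA
  have hV1 : (1 : X) ∈ V := mem_of_mem_nhds hV
  have hV4 : ∀ a ∈ V, ∀ b ∈ V, ∀ c ∈ V, ∀ e ∈ V, a * b * (c * e) ∈ U :=
    fun a ha b hb c hc e he => hA2 _ (hV2 a ha b hb) _ (hV2 c hc e he)
  have hpick : ∀ F : Finset X, ∃ e, e ∈ E ∧ e ∉ ↑F * U := by
    intro F
    obtain ⟨e, he, hne⟩ := Set.not_subset.1 (h F)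
    exact ⟨e, he, hne⟩
  choose pick hpickE hpickU using hpick
  set Fs : ℕ → Finset X := fun n => Nat.rec ∅ (fun _ F => insert (pick F) F) n with hFs
  set x : ℕ → X := fun n => pick (Fs n) with hxdef
  have hFs_succ : ∀ n, Fs (n + 1) = insert (x n) (Fs n) := fun n => rfl
  have hxE : ∀ n, x n ∈ E := fun n => hpickE (Fs n)
  have hx_in : ∀ k n, k < n → x k ∈ Fs n := by
    intro k n hk
    induction n with
    | zero => exact absurd hk (Nat.not_lt_zero k)
    | succ n ih =>
      rw [hFs_succ]
      rcases Nat.lt_succ_iff_lt_or_eq.1 hk with h' | h'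
      · exact Finset.mem_insert_of_mem (ih h')
      · subst h'; exact Finset.mem_insert_self _ _
  have hsep : ∀ k n, k < n → (x k)⁻¹ * x n ∉ U := by
    intro k n hk hmem
    apply hpickU (Fs n)
    exact ⟨x k, hx_in k n hk, (x k)⁻¹ * x n, hmem, by group; rfl⟩
  have claim : ∀ {m n : ℕ} {y : X}, (x m)⁻¹ * y ∈ V * V → (x n)⁻¹ * y ∈ V * V → m = n := by
    intro m n y hm hn
    by_contra hne
    obtain ⟨a, ha, b, hb, hab⟩ := hm
    obtain ⟨c, hc, e, he, hce⟩ := hn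
    rcases lt_or_gt_of_ne hne with hlt | hlt
    · apply hsep m n hlt
      have hab' : a * b = (x m)⁻¹ * y := hab
      have hce' : c * e = (x n)⁻¹ * y := hce
      have h1 : a * b * (e⁻¹ * c⁻¹) = (x m)⁻¹ * x n := by
        rw [hab', ← mul_inv_rev, hce']; group
      rw [← h1]
      exact hV4 a ha b hb e⁻¹ (hVsym _ he) c⁻¹ (hVsym _ hc)
    · apply hsep n m hlt
      have hab' : a * b = (x m)⁻¹ * y := hab
      have hce' : c * e = (x n)⁻¹ * y := hce
      have h1 : c * e * (b⁻¹ * a⁻¹) = (x n)⁻¹ * x m := by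
        rw [hce', ← mul_inv_rev, hab']; group
      rw [← h1]
      exact hV4 c hc e he b⁻¹ (hVsym _ hb) a⁻¹ (hVsym _ ha)
  obtain ⟨g, hg, hg1, hg0, hgV⟩ := exists_bump hV
  set f : X → ℝ := fun y => ∑' n : ℕ, (n : ℝ) * g ((x n)⁻¹ * y) with hfdef
  have hsupp : ∀ n z, g ((x n)⁻¹ * z) ≠ 0 → (x n)⁻¹ * z ∈ V := by
    intro n z hz
    by_contra hc
    exact hz (hgV _ hc)
  have hfc : Continuous f := by
    rw [continuous_iff_continuousAt]
    intro y₀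
    have hc : Continuous fun z : X => y₀⁻¹ * z := continuous_const.mul continuous_id
    have hN : (fun z : X => y₀⁻¹ * z) ⁻¹' V ∈ 𝓝 y₀ := by
      apply ContinuousAt.preimage_mem_nhds hc.continuousAt
      rw [inv_mul_cancel]; exact hV
    have hVV : ∀ z ∈ (fun z : X => y₀⁻¹ * z) ⁻¹' V, ∀ n, g ((x n)⁻¹ * z) ≠ 0 →
        (x n)⁻¹ * y₀ ∈ V * V := by
      intro z hz n hgz
      exact ⟨(x n)⁻¹ * z, hsupp n z hgz, (y₀⁻¹ * z)⁻¹, hVsym _ hz, by group⟩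
    by_cases hex : ∃ n, (x n)⁻¹ * y₀ ∈ V * V
    · obtain ⟨n₀, hn₀⟩ := hex
      have hloc : ∀ z ∈ (fun z : X => y₀⁻¹ * z) ⁻¹' V,
          f z = (n₀ : ℝ) * g ((x n₀)⁻¹ * z) := by
        intro z hz
        apply tsum_eq_single
        intro m hm
        by_contra hmz
        have hgm : g ((x m)⁻¹ * z) ≠ 0 := fun h0 => hmz (by rw [h0, mul_zero])
        exact hm (claim (hVV z hz m hgm) hn₀)
      have hcg : ContinuousAt (fun z => (n₀ : ℝ) * g ((x n₀)⁻¹ * z)) y₀ :=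
        (continuous_const.mul (hg.comp (continuous_const.mul continuous_id))).continuousAt
      have hev : f =ᶠ[𝓝 y₀] fun z => (n₀ : ℝ) * g ((x n₀)⁻¹ * z) :=
        Filter.eventually_of_mem hN fun z hz => hloc z hz
      exact hcg.congr hev.symm
    · have hloc : ∀ z ∈ (fun z : X => y₀⁻¹ * z) ⁻¹' V, f z = 0 := by
        intro z hz
        have hall : ∀ m : ℕ, (m : ℝ) * g ((x m)⁻¹ * z) = 0 := by
          intro m
          rcases eq_or_ne (g ((x m)⁻¹ * z)) 0 with h0 | h0
          · rw [h0, mul_zero]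
          · exact absurd ⟨m, hVV z hz m h0⟩ hex
        have : f z = ∑' _ : ℕ, (0 : ℝ) := tsum_congr fun m => hall m
        rw [this, tsum_zero]
      have hev : f =ᶠ[𝓝 y₀] fun _ => (0 : ℝ) :=
        Filter.eventually_of_mem hN fun z hz => hloc z hz
      exact continuousAt_const.congr hev.symm
  have hval : ∀ n, f (x n) = n := by
    intro n
    have hx_self : (x n)⁻¹ * x n ∈ V * V := by
      rw [inv_mul_cancel]; exact ⟨1, hV1, 1, hV1, mul_one 1⟩
    have hsingle : f (x n) = (n : ℝ) * g ((x n)⁻¹ * x n) := by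
      apply tsum_eq_single
      intro m hm
      by_contra hmz
      have hgm : g ((x m)⁻¹ * x n) ≠ 0 := fun h0 => hmz (by rw [h0, mul_zero])
      have h2 : (x m)⁻¹ * x n ∈ V * V := ⟨_, hsupp _ _ hgm, 1, hV1, mul_one _⟩
      exact hm (claim h2 hx_self)
    rw [hsingle, inv_mul_cancel, hg1, mul_one]
  intro hFB
  obtain ⟨C, hC⟩ := isBounded_iff_forall_norm_le.1 (hFB f hfc)
  set n : ℕ := ⌈C⌉₊ + 1 with hn
  have h1 : ‖f (x n)‖ ≤ C := hC _ ⟨x n, hxE n, rfl⟩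
  rw [hval n] at h1
  have h2 : (n : ℝ) ≤ C := by rwa [Real.norm_natCast] at h1
  have h3 : C < (n : ℝ) := by
    have := Nat.le_ceil C
    rw [hn]
    push_cast
    linarith
  linarith

lemma not_functionallyBounded_right {X : Type*} [Group X] [TopologicalSpace X]
    [IsTopologicalGroup X] {E U : Set X} (hU : U ∈ 𝓝 (1 : X))
    (h : ∀ F : Finset X, ¬ E ⊆ U * ↑F) : ¬ FunctionallyBounded E := by
  classical
  have hU' : MulOpposite.op '' U ∈ 𝓝 (1 : Xᵐᵒᵖ) := by
    have := MulOpposite.opHomeomorph.isOpenMap.image_mem_nhds (x := (1 : X)) hU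
    simpa using this
  have h' : ∀ F' : Finset Xᵐᵒᵖ, ¬ (MulOpposite.op '' E ⊆ ↑F' * (MulOpposite.op '' U)) := by
    intro F' hsub
    apply h (F'.image MulOpposite.unop)
    intro e he
    obtain ⟨f', hf', u', hu', heq⟩ := hsub ⟨e, he, rfl⟩
    obtain ⟨u, hu, rfl⟩ := hu'
    refine ⟨u, hu, MulOpposite.unop f', ?_, ?_⟩
    · rw [Finset.coe_image]
      exact ⟨f', hf', rfl⟩
    · have heq' : f' * MulOpposite.op u = MulOpposite.op e := heq
      have : e = MulOpposite.unop (f' * MulOpposite.op u) := by rw [heq']; rfl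
      rw [this, MulOpposite.unop_mul]
      simp
  have hL := not_functionallyBounded_left hU' h'
  intro hFB
  apply hL
  intro f hf
  have h1 := hFB (f ∘ MulOpposite.op) (hf.comp MulOpposite.continuous_op)
  rwa [Set.image_comp] at h1

/-- Let `E` be a subset of a topological group `X` that is complete with respect to its
two-sided (Raĭkov) uniformity. Then the following are equivalent: (i) `E` is functionally
bounded in `X`; (ii) `E` is precompact (totally bounded); (iii) the closure of `E` in `X`
is compact. -/
theorem functionallyBounded_tfae_of_raikovComplete {X : Type*} [Group X] [TopologicalSpace X]
    [IsTopologicalGroup X] (hX : RaikovComplete X) (E : Set X) :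
    List.TFAE [FunctionallyBounded E,
      ∀ U ∈ 𝓝 (1 : X), ∃ F : Finset X, E ⊆ ↑F * U ∧ E ⊆ U * ↑F,
      IsCompact (closure E)] := by
  tfae_have 1 → 2 := by
    classical
    intro h1 U hU
    by_contra hc
    push_neg at hc
    by_cases hl : ∃ F₀ : Finset X, E ⊆ ↑F₀ * U
    · obtain ⟨F₀, hF₀⟩ := hl
      refine not_functionallyBounded_right hU (fun F => fun hsub => ?_) h1
      have h1' : E ⊆ ↑(F₀ ∪ F) * U :=
        hF₀.trans (Set.mul_subset_mul_right (by exact_mod_cast Finset.subset_union_left))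
      have h2' : E ⊆ U * ↑(F₀ ∪ F) :=
        hsub.trans (Set.mul_subset_mul_left (by exact_mod_cast Finset.subset_union_right))
      exact hc (F₀ ∪ F) h1' h2'
    · push_neg at hl
      exact absurd h1 (not_functionallyBounded_left hU hl)
  tfae_have 2 → 3 := by
    intro h2
    rw [isCompact_iff_ultrafilter_le_nhds]
    intro G hG
    rw [le_principal_iff] at hG
    have hcauchy : ∀ V ∈ 𝓝 (1 : X), ∃ S ∈ (G : Filter X), ∀ x ∈ S, ∀ y ∈ S,
        y * x⁻¹ ∈ V ∧ x⁻¹ * y ∈ V := by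
      intro V hV
      obtain ⟨A, hA, hAsym, hA2⟩ := aux_split hV
      obtain ⟨W, hW, hWsym, hW2⟩ := aux_split hA
      obtain ⟨F, hF1, hF2⟩ := h2 W hW
      -- closure E ⊆ F * (W * W) and closure E ⊆ (W * W) * F
      have hcl1 : closure E ⊆ ⋃ f ∈ (F : Set X), {z | f⁻¹ * z ∈ W * W} := by
        intro z hz
        have hnb : {w | z⁻¹ * w ∈ W⁻¹} ∈ 𝓝 z := by
          have hc : Continuous fun w : X => z⁻¹ * w := continuous_const.mul continuous_id
          apply ContinuousAt.preimage_mem_nhds hc.continuousAt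
          rw [inv_mul_cancel]
          exact (inv_mem_nhds_one X hW)
        obtain ⟨e, he, heE⟩ := mem_closure_iff_nhds.1 hz _ hnb
        obtain ⟨f, hf, w, hw, hfw⟩ := hF1 heE
        simp only [Set.mem_iUnion, Set.mem_setOf_eq]
        refine ⟨f, hf, ?_⟩
        have he' : z⁻¹ * e ∈ W⁻¹ := he
        have : f⁻¹ * z = w * (z⁻¹ * e)⁻¹ := by rw [← hfw]; group
        rw [this]
        exact ⟨w, hw, (z⁻¹ * e)⁻¹, Set.inv_mem_inv.1 (by simpa using he'), rfl⟩
      have hcl2 : closure E ⊆ ⋃ f ∈ (F : Set X), {z | z * f⁻¹ ∈ W * W} := by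
        intro z hz
        have hnb : {w | w * z⁻¹ ∈ W} ∈ 𝓝 z := by
          have hc : Continuous fun w : X => w * z⁻¹ := continuous_id.mul continuous_const
          apply ContinuousAt.preimage_mem_nhds hc.continuousAt
          rw [mul_inv_cancel]
          exact hW
        obtain ⟨e, he, heE⟩ := mem_closure_iff_nhds.1 hz _ hnb
        obtain ⟨w, hw, f, hf, hfw⟩ := hF2 heE
        simp only [Set.mem_iUnion, Set.mem_setOf_eq]
        refine ⟨f, hf, ?_⟩
        have he' : e * z⁻¹ ∈ W := he
        have : z * f⁻¹ = (e * z⁻¹)⁻¹ * w := by rw [← hfw]; group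
        rw [this]
        exact ⟨(e * z⁻¹)⁻¹, hWsym _ he', w, hw, rfl⟩
      -- pick the pieces in the ultrafilter
      have hm1 : (⋃ f ∈ (F : Set X), {z | f⁻¹ * z ∈ W * W}) ∈ (G : Filter X) :=
        mem_of_superset hG hcl1
      have hm2 : (⋃ f ∈ (F : Set X), {z | z * f⁻¹ ∈ W * W}) ∈ (G : Filter X) :=
        mem_of_superset hG hcl2
      obtain ⟨f, hf, hfG⟩ :=
        (Ultrafilter.finite_biUnion_mem_iff (Finset.finite_toSet F)).1 hm1
      obtain ⟨g, hg, hgG⟩ :=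
        (Ultrafilter.finite_biUnion_mem_iff (Finset.finite_toSet F)).1 hm2
      refine ⟨{z | f⁻¹ * z ∈ W * W} ∩ {z | z * g⁻¹ ∈ W * W}, inter_mem hfG hgG, ?_⟩
      rintro a ⟨ha1, ha2⟩ b ⟨hb1, hb2⟩
      constructor
      · -- b * a⁻¹ ∈ V
        obtain ⟨w1, hw1, w2, hw2, hab⟩ := hb2
        obtain ⟨w3, hw3, w4, hw4, hcd⟩ := ha2
        have hab' : w1 * w2 = b * g⁻¹ := hab
        have hcd' : w3 * w4 = a * g⁻¹ := hcd
        have : b * a⁻¹ = (w1 * w2) * (w4⁻¹ * w3⁻¹) := by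
          rw [hab', ← mul_inv_rev, hcd']; group
        rw [this]
        exact hA2 _ (hW2 _ hw1 _ hw2) _ (hW2 _ (hWsym _ hw4) _ (hWsym _ hw3))
      · -- a⁻¹ * b ∈ V
        obtain ⟨w1, hw1, w2, hw2, hab⟩ := ha1
        obtain ⟨w3, hw3, w4, hw4, hcd⟩ := hb1
        have hab' : w1 * w2 = f⁻¹ * a := hab
        have hcd' : w3 * w4 = f⁻¹ * b := hcd
        have : a⁻¹ * b = (w2⁻¹ * w1⁻¹) * (w3 * w4) := by
          rw [← mul_inv_rev, hab', hcd']; group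
        rw [this]
        exact hA2 _ (hW2 _ (hWsym _ hw2) _ (hWsym _ hw1)) _ (hW2 _ hw3 _ hw4)
    obtain ⟨x, hx⟩ := hX G G.neBot hcauchy
    refine ⟨x, ?_, hx⟩
    have h1 : (G : Filter X) ≤ 𝓝 x ⊓ 𝓟 (closure E) := le_inf hx (le_principal_iff.2 hG)
    have : ClusterPt x (𝓟 (closure E)) := neBot_of_le h1
    rw [← closure_closure (s := E)]
    exact mem_closure_iff_clusterPt.2 this
  tfae_have 3 → 1 := by
    intro h3 f hf
    have h1 : IsCompact (f '' closure E) := h3.image hf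
    exact h1.isBounded.subset (Set.image_mono subset_closure)
  tfae_finish
end

section
/- Let H be an open subgroup of a maximally almost periodic abelian topological group X, and let E be a subset of X that is functionally bounded in X⁺ (X with the weak topology σ(X, X̂)). Then E is contained in a finite union of cosets of H, i.e., there is a finite set F ⊆ X with E ⊆ F + H. -/
open Filter Topology Set Pointwise

/-- The weak (Bohr) topology `σ(X, X̂)` on an abelian topological group `X`: the coarsest
topology making all continuous characters `X → 𝕋 = ℝ/ℤ` continuous. -/
noncomputable def weakTopology (X : Type*) [AddCommGroup X] [TopologicalSpace X] :
    TopologicalSpace X :=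
  ⨅ (χ : X →+ UnitAddCircle) (_ : Continuous χ), TopologicalSpace.induced χ inferInstance

/-- An abelian topological group is maximally almost periodic (MAP) if its continuous
characters separate its points. -/
def MAPGroup (X : Type*) [AddCommGroup X] [TopologicalSpace X] : Prop :=
  ∀ x : X, x ≠ 0 → ∃ χ : X →+ UnitAddCircle, Continuous χ ∧ χ x ≠ 0

/-- A subset `E` of a set carrying a topology `t` is functionally bounded if every
`t`-continuous real-valued function is bounded on `E`. -/
def FunctionallyBoundedIn {Y : Type*} (t : TopologicalSpace Y) (E : Set Y) : Prop :=
  ∀ f : Y → ℝ, @Continuous Y ℝ t _ f → Bornology.IsBounded (f '' E)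

open MeasureTheory


/-- The group of all (not necessarily continuous) characters of `V`, as a subgroup of the
product `V → 𝕋`. -/
noncomputable def charSubgroup (V : Type*) [AddCommGroup V] : AddSubgroup (V → UnitAddCircle) where
  carrier := {f | ∀ a b, f (a + b) = f a + f b}
  add_mem' := by
    intro f g hf hg a b
    simp only [Pi.add_apply, hf a b, hg a b]
    abel
  zero_mem' := by intro a b; simp
  neg_mem' := by
    intro f hf a b
    simp only [Pi.neg_apply, hf a b]
    abel

/-- Package a member of `charSubgroup` as an `AddMonoidHom`. -/
noncomputable def charSubgroup.toHom {V : Type*} [AddCommGroup V] (ψ : charSubgroup V) :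
    V →+ UnitAddCircle where
  toFun := ψ.1
  map_zero' := by
    have h := ψ.2 0 0
    rw [add_zero] at h
    exact (left_eq_add.mp h)
  map_add' := ψ.2

lemma charSubgroup.isClosed (V : Type*) [AddCommGroup V] :
    IsClosed ((charSubgroup V : Set (V → UnitAddCircle))) := by
  have : (charSubgroup V : Set (V → UnitAddCircle)) =
      ⋂ (a : V), ⋂ (b : V), {f | f (a + b) = f a + f b} := by
    ext f
    simp only [Set.mem_iInter, Set.mem_setOf_eq]
    rfl
  rw [this]
  refine isClosed_iInter fun a => isClosed_iInter fun b => ?_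
  exact isClosed_eq (continuous_apply (a + b)) ((continuous_apply a).add (continuous_apply b))

/-- **Key measure-theoretic lemma.** If `γ` is an injective sequence in an abelian group `V`
whose characters separate points, then some character of `V` does not send `γ` to a null
sequence. -/
lemma exists_char_not_tendsto {V : Type*} [AddCommGroup V]
    (hsep : ∀ v : V, v ≠ 0 → ∃ ψ : V →+ UnitAddCircle, ψ v ≠ 0)
    (γ : ℕ → V) (hγ : Function.Injective γ) :
    ∃ ψ : V →+ UnitAddCircle, ¬ Tendsto (fun j => ψ (γ j)) atTop (𝓝 0) := by
  by_contra hcon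
  push_neg at hcon
  haveI : Fact ((0:ℝ) < 1) := ⟨one_pos⟩
  set Λ := charSubgroup V with hΛ
  haveI : Nonempty Λ := ⟨0⟩
  haveI : CompactSpace Λ :=
    isCompact_iff_compactSpace.mp ((charSubgroup.isClosed V).isCompact)
  letI : MeasurableSpace Λ := borel Λ
  haveI : BorelSpace Λ := ⟨rfl⟩
  let K₀ : TopologicalSpace.PositiveCompacts Λ :=
    ⟨⟨Set.univ, isCompact_univ⟩, by rw [interior_univ]; exact Set.univ_nonempty⟩
  set μ := MeasureTheory.Measure.addHaarMeasure K₀ with hμ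
  have hμuniv : μ Set.univ = 1 := MeasureTheory.Measure.addHaarMeasure_self (K₀ := K₀)
  haveI : IsFiniteMeasure μ := ⟨by rw [hμuniv]; exact ENNReal.one_lt_top⟩
  set F : ℕ → Λ → ℂ := fun j ψ => (AddCircle.toCircle (ψ.1 (γ j)) : ℂ) with hF
  have hFc : ∀ j, Continuous (F j) := by
    intro j
    exact continuous_subtype_val.comp <| AddCircle.continuous_toCircle.comp <|
      (continuous_apply (γ j)).comp continuous_subtype_val
  have horth : ∀ j, γ j ≠ 0 → ∫ ψ, F j ψ ∂μ = 0 := by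
    intro j hne
    obtain ⟨ψ₀, hψ₀⟩ := hsep _ hne
    set Ψ : Λ := ⟨⇑ψ₀, fun a b => map_add ψ₀ a b⟩ with hΨ
    have hinv : ∫ ψ, F j (Ψ + ψ) ∂μ = ∫ ψ, F j ψ ∂μ :=
      MeasureTheory.integral_add_left_eq_self (F j) Ψ
    have hmul : ∀ ψ : Λ, F j (Ψ + ψ) =
        (AddCircle.toCircle (ψ₀ (γ j)) : ℂ) * F j ψ := by
      intro ψ
      show ((AddCircle.toCircle (((Ψ + ψ) : Λ).1 (γ j))) : ℂ) = _
      have : ((Ψ + ψ) : Λ).1 (γ j) = ψ₀ (γ j) + ψ.1 (γ j) := rfl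
      rw [this, AddCircle.toCircle_add]
      push_cast
      ring
    rw [funext hmul] at hinv
    have hsmul : ∫ ψ, (AddCircle.toCircle (ψ₀ (γ j)) : ℂ) * F j ψ ∂μ =
        (AddCircle.toCircle (ψ₀ (γ j)) : ℂ) * ∫ ψ, F j ψ ∂μ := by
      simpa using MeasureTheory.integral_smul ((AddCircle.toCircle (ψ₀ (γ j))) : ℂ) (F j)
    rw [hsmul] at hinv
    have hc1 : (AddCircle.toCircle (ψ₀ (γ j)) : ℂ) ≠ 1 := by
      intro h
      apply hψ₀
      have h2 : AddCircle.toCircle (ψ₀ (γ j)) = AddCircle.toCircle (0 : UnitAddCircle) := by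
        rw [AddCircle.toCircle_zero]
        exact Subtype.ext h
      exact AddCircle.injective_toCircle one_ne_zero h2
    by_contra hI
    exact hc1 (mul_right_cancel₀ hI (by rw [hinv, one_mul]))
  -- dominated convergence
  have hlim : Tendsto (fun j => ∫ ψ, F j ψ ∂μ) atTop (𝓝 (∫ _ψ : Λ, (1:ℂ) ∂μ)) := by
    refine MeasureTheory.tendsto_integral_of_dominated_convergence (fun _ => 1)
      (fun j => (hFc j).aestronglyMeasurable) (MeasureTheory.integrable_const 1) ?_ ?_
    · intro j
      refine Filter.Eventually.of_forall fun ψ => ?_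
      show ‖((AddCircle.toCircle (ψ.1 (γ j))) : ℂ)‖ ≤ 1
      rw [mem_sphere_zero_iff_norm.1 (AddCircle.toCircle (ψ.1 (γ j))).2]
    · refine Filter.Eventually.of_forall fun ψ => ?_
      have h0 : Tendsto (fun j => ψ.1 (γ j)) atTop (𝓝 0) := hcon (charSubgroup.toHom ψ)
      have h1 : Tendsto (fun j => AddCircle.toCircle (ψ.1 (γ j))) atTop
          (𝓝 (AddCircle.toCircle (0 : UnitAddCircle))) :=
        (AddCircle.continuous_toCircle.tendsto _).comp h0
      rw [AddCircle.toCircle_zero] at h1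
      exact (continuous_subtype_val.tendsto _).comp h1
  have hconst : (∫ _ψ : Λ, (1:ℂ) ∂μ) = 1 := by
    rw [MeasureTheory.integral_const, measureReal_def, hμuniv]
    simp
  rw [hconst] at hlim
  -- but the integrals are eventually zero
  have hev : ∀ᶠ j in atTop, (∫ ψ, F j ψ ∂μ) = 0 := by
    rcases em (∃ j₀, γ j₀ = 0) with ⟨j₀, hj₀⟩ | hno
    · refine eventually_atTop.mpr ⟨j₀ + 1, fun j hj => ?_⟩
      apply horth
      intro h
      have : j = j₀ := hγ (h.trans hj₀.symm)
      omega
    · push_neg at hno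
      exact Filter.Eventually.of_forall fun j => horth j (hno j)
  have : Tendsto (fun j => ∫ ψ, F j ψ ∂μ) atTop (𝓝 0) :=
    Tendsto.congr' (Filter.EventuallyEq.symm hev) tendsto_const_nhds
  exact one_ne_zero (tendsto_nhds_unique hlim this)


/-- Every abelian group is separated by its `𝕋`-valued characters. -/
lemma exists_hom_ne_zero {V : Type*} [AddCommGroup V] (v : V) (hv : v ≠ 0) :
    ∃ ψ : V →+ UnitAddCircle, ψ v ≠ 0 := by
  obtain ⟨c, hc⟩ := CharacterModule.exists_character_apply_ne_zero_of_ne_zero hv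
  have hle : AddSubgroup.zmultiples (1 : ℚ) ≤
      AddSubgroup.comap ((Rat.castHom ℝ).toAddMonoidHom) (AddSubgroup.zmultiples (1 : ℝ)) := by
    intro r hr
    obtain ⟨z, hz⟩ := AddSubgroup.mem_zmultiples_iff.mp hr
    refine AddSubgroup.mem_comap.mpr (AddSubgroup.mem_zmultiples_iff.mpr ⟨z, ?_⟩)
    rw [← hz]
    simp
  set θ : AddCircle (1 : ℚ) →+ UnitAddCircle :=
    QuotientAddGroup.map (AddSubgroup.zmultiples (1 : ℚ)) (AddSubgroup.zmultiples (1 : ℝ))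
      ((Rat.castHom ℝ).toAddMonoidHom) hle with hθ
  have hθ0 : ∀ w : AddCircle (1 : ℚ), θ w = 0 → w = 0 := by
    intro w hw
    induction w using QuotientAddGroup.induction_on with
    | H r =>
      have : θ ((r : AddCircle (1 : ℚ))) = ((r : ℝ) : AddCircle (1 : ℝ)) := rfl
      rw [this] at hw
      have hmem : (r : ℝ) ∈ AddSubgroup.zmultiples (1 : ℝ) :=
        (QuotientAddGroup.eq_zero_iff _).mp hw
      obtain ⟨z, hz⟩ := AddSubgroup.mem_zmultiples_iff.mp hmem
      have : r = (z : ℚ) := by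
        have : (z : ℝ) = (r : ℝ) := by simpa using hz
        exact_mod_cast this.symm
      rw [QuotientAddGroup.eq_zero_iff]
      exact AddSubgroup.mem_zmultiples_iff.mpr ⟨z, by simp [this]⟩
  exact ⟨θ.comp c, fun h => hc (hθ0 _ h)⟩

section rho

variable {X : Type*} [AddCommGroup X] (H : AddSubgroup X) (x : ℕ → X)

/-- The canonical map from the free abelian group on `ℕ` hitting the classes of the `x n`. -/
noncomputable def fD : FreeAbelianGroup ℕ →+ X ⧸ H :=
  FreeAbelianGroup.lift (fun n => QuotientAddGroup.mk' H (x n))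

/-- The embedding of the free abelian group on `ℕ` into the rational finsupp space. -/
noncomputable def iotaQ : FreeAbelianGroup ℕ →+ (ℕ →₀ ℚ) :=
  (Finsupp.mapRange.addMonoidHom (Int.castAddHom ℚ)).comp FreeAbelianGroup.toFinsupp

lemma iotaQ_injective : Function.Injective (iotaQ) := by
  have h1 : Function.Injective ⇑(Finsupp.mapRange.addMonoidHom (ι := ℕ) (Int.castAddHom ℚ)) :=
    fun a b h => Finsupp.mapRange_injective (α := ℕ) ((↑·) : ℤ → ℚ) Int.cast_zero
      Int.cast_injective h
  have h2 : Function.Injective ⇑(FreeAbelianGroup.toFinsupp (X := ℕ)) :=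
    Function.LeftInverse.injective Finsupp.toFreeAbelianGroup_toFinsupp
  show Function.Injective
    (⇑(Finsupp.mapRange.addMonoidHom (ι := ℕ) (Int.castAddHom ℚ)) ∘ ⇑FreeAbelianGroup.toFinsupp)
  exact Function.Injective.comp h1 h2

lemma iotaQ_of (n : ℕ) : iotaQ (FreeAbelianGroup.of n) = Finsupp.single n (1 : ℚ) := by
  have : iotaQ (FreeAbelianGroup.of n) =
      Finsupp.mapRange ((↑·) : ℤ → ℚ) Int.cast_zero (Finsupp.single n (1:ℤ)) := by
    show (Finsupp.mapRange.addMonoidHom (Int.castAddHom ℚ))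
        (FreeAbelianGroup.toFinsupp (FreeAbelianGroup.of n)) = _
    rw [FreeAbelianGroup.toFinsupp_of]
    rfl
  rw [this, Finsupp.mapRange_single]
  norm_num

lemma fD_of (n : ℕ) : (fD H x) (FreeAbelianGroup.of n) = QuotientAddGroup.mk' H (x n) :=
  FreeAbelianGroup.lift_apply_of _ _

/-- The subgroup of relations. -/
noncomputable def KK : AddSubgroup (ℕ →₀ ℚ) := ((fD H x).ker).map iotaQ

/-- A countable divisible group receiving `X ⧸ H` (injectively on the subgroup generated by
the `x n`). -/
def VV := (ℕ →₀ ℚ) ⧸ KK H x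

noncomputable instance : AddCommGroup (VV H x) := QuotientAddGroup.Quotient.addCommGroup _

instance : Countable (VV H x) :=
  (QuotientAddGroup.mk'_surjective (KK H x)).countable

noncomputable instance : DivisibleBy (ℕ →₀ ℚ) ℤ where
  div a n := (n : ℚ)⁻¹ • a
  div_zero a := by norm_num
  div_cancel a hn := by
    rw [← Int.cast_smul_eq_zsmul ℚ, smul_smul, mul_inv_cancel₀ (by exact_mod_cast hn), one_smul]

noncomputable instance : DivisibleBy (VV H x) ℤ :=
  Function.Surjective.divisibleBy (QuotientAddGroup.mk' (KK H x))
    (QuotientAddGroup.mk'_surjective _) (fun a n => map_zsmul (QuotientAddGroup.mk' (KK H x)) n a)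

lemma exists_rho
    (hx : ∀ m n : ℕ, m ≠ n → QuotientAddGroup.mk' H (x m) ≠ QuotientAddGroup.mk' H (x n)) :
    ∃ ρ : X →+ VV H x, (∀ h ∈ H, ρ h = 0) ∧ Function.Injective (fun n => ρ (x n)) := by
  classical
  set q := QuotientAddGroup.mk' H with hq
  set mkK := QuotientAddGroup.mk' (KK H x) with hmkK
  have hker : ∀ a ∈ (fD H x).ker, (mkK.comp iotaQ) a = 0 := by
    intro a ha
    show mkK (iotaQ a) = 0
    rw [hmkK, QuotientAddGroup.mk'_apply, QuotientAddGroup.eq_zero_iff]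
    exact AddSubgroup.mem_map_of_mem _ ha
  set g' : FreeAbelianGroup ℕ ⧸ (fD H x).ker →+ VV H x :=
    QuotientAddGroup.lift _ (mkK.comp iotaQ) hker with hg'
  obtain ⟨ρ₀, hρ₀⟩ := (Module.Baer.of_divisible (VV H x)).extension_property_addMonoidHom
      (QuotientAddGroup.kerLift (fD H x)) (QuotientAddGroup.kerLift_injective _) g'
  have hval : ∀ n : ℕ, ρ₀ (q (x n)) = mkK (Finsupp.single n (1 : ℚ)) := by
    intro n
    have h1 : q (x n) = (fD H x) (FreeAbelianGroup.of n) := by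
      rw [hq, fD_of]
    have h2 : (fD H x) (FreeAbelianGroup.of n) =
        QuotientAddGroup.kerLift (fD H x) ((FreeAbelianGroup.of n : FreeAbelianGroup ℕ) :
          FreeAbelianGroup ℕ ⧸ (fD H x).ker) := by
      rw [QuotientAddGroup.kerLift_mk]
    rw [h1, h2, ← AddMonoidHom.comp_apply, hρ₀]
    show (mkK.comp iotaQ) (FreeAbelianGroup.of n) = _
    rw [AddMonoidHom.comp_apply, iotaQ_of]
  refine ⟨ρ₀.comp q, ?_, ?_⟩
  · intro h hh
    show ρ₀ (q h) = 0
    have : q h = 0 := (QuotientAddGroup.eq_zero_iff h).mpr hh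
    rw [this, map_zero]
  · intro n m hnm
    by_contra hne
    have hval2 : mkK (Finsupp.single n (1:ℚ)) = mkK (Finsupp.single m (1:ℚ)) := by
      have := hnm
      simp only [AddMonoidHom.comp_apply] at this
      rw [hval n, hval m] at this
      exact this
    have hmem : Finsupp.single n (1:ℚ) - Finsupp.single m (1:ℚ) ∈ KK H x := by
      have : mkK (Finsupp.single n (1:ℚ) - Finsupp.single m (1:ℚ)) = 0 := by
        rw [map_sub, hval2, sub_self]
      rw [hmkK, QuotientAddGroup.mk'_apply, QuotientAddGroup.eq_zero_iff] at this
      exact this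
    obtain ⟨a, ha, haa⟩ := hmem
    have haof : a = FreeAbelianGroup.of n - FreeAbelianGroup.of m := by
      apply iotaQ_injective
      rw [haa, map_sub, iotaQ_of, iotaQ_of]
    have : (fD H x) (FreeAbelianGroup.of n - FreeAbelianGroup.of m) = 0 := by
      rw [← haof]; exact ha
    rw [map_sub, sub_eq_zero, fD_of, fD_of] at this
    exact hx n m hne this

end rho


section escape
variable {V : Type*} [AddCommGroup V]

/-- Extraction form: some character of `V` is bounded away from `0` along a subsequence. -/
lemma exists_char_escape (γ : ℕ → V) (hγ : Function.Injective γ) :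
    ∃ (ψ : V →+ UnitAddCircle) (ε : ℝ) (φ : ℕ → ℕ), 0 < ε ∧ StrictMono φ ∧
      ∀ i, ε ≤ ‖ψ (γ (φ i))‖ := by
  obtain ⟨ψ, hψ⟩ := exists_char_not_tendsto (fun v hv => exists_hom_ne_zero v hv) γ hγ
  rw [Metric.tendsto_atTop] at hψ
  push_neg at hψ
  obtain ⟨ε, hε, hfreq⟩ := hψ
  have hfr : ∃ᶠ n in atTop, ε ≤ ‖ψ (γ n)‖ := by
    rw [frequently_atTop]
    intro N
    obtain ⟨n, hn, h⟩ := hfreq N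
    exact ⟨n, hn, by rwa [dist_zero_right] at h⟩
  obtain ⟨φ, hφmono, hφ⟩ := Filter.extraction_of_frequently_atTop hfr
  exact ⟨ψ, ε, φ, hε, hφmono, hφ⟩

end escape

/-- Characters that kill an open subgroup are continuous. -/
lemma continuous_of_vanishing_on_open {X : Type*} [AddCommGroup X] [TopologicalSpace X]
    [IsTopologicalAddGroup X] (H : AddSubgroup X) (hH : IsOpen (H : Set X))
    (χ : X →+ UnitAddCircle) (hker : ∀ h ∈ H, χ h = 0) : Continuous ⇑χ := by
  rw [continuous_def]
  intro s _hs
  refine isOpen_iff_forall_mem_open.mpr (fun y hy => ?_)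
  refine ⟨(fun z => y + z) '' (H : Set X), ?_, ?_, ⟨0, H.zero_mem, by simp⟩⟩
  · rintro w ⟨h, hh, rfl⟩
    show χ (y + h) ∈ s
    rw [map_add, hker h hh, add_zero]
    exact hy
  · exact (Homeomorph.addLeft y).isOpenMap _ hH

/-- A character continuous for the original topology is continuous for the weak topology. -/
lemma weak_continuous {X : Type*} [AddCommGroup X] [TopologicalSpace X]
    (χ : X →+ UnitAddCircle) (h : Continuous ⇑χ) :
    @Continuous X UnitAddCircle (weakTopology X) _ ⇑χ := by
  have hle : weakTopology X ≤ TopologicalSpace.induced ⇑χ inferInstance := by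
    refine le_trans (iInf_le _ χ) ?_
    exact iInf_le _ h
  exact continuous_iff_le_induced.mpr hle

/-- Bump-function construction: the defense property yields a weakly continuous unbounded
function, contradicting functional boundedness. -/
lemma aux_unbounded {X : Type*} [AddCommGroup X] [t : TopologicalSpace X]
    (χ : ℕ → X →+ UnitAddCircle) (hχ : ∀ k, Continuous ⇑(χ k))
    (b : ℕ → X) (E : Set X) (hbE : ∀ j, b j ∈ E)
    (hP : ∀ x : X, ∃ k ε J, 0 < ε ∧ ∀ j, J ≤ j → ε ≤ ‖χ k (b j) - χ k x‖) :
    ¬ FunctionallyBoundedIn t E := by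
  intro hFB
  classical
  set s : ℕ → X → ℝ := fun j y => ∑ k ∈ Finset.range (j+1), ‖χ k y - χ k (b j)‖ with hs
  set φf : ℕ → X → ℝ := fun j y => max 0 (1 - 2^(j+1) * s j y) with hφf
  have hscont : ∀ j, Continuous (s j) :=
    fun j => continuous_finset_sum _ (fun k _ => ((hχ k).sub continuous_const).norm)
  have hφcont : ∀ j, Continuous (φf j) :=
    fun j => continuous_const.max (continuous_const.sub (continuous_const.mul (hscont j)))
  have hφ0 : ∀ j y, 0 ≤ φf j y := fun j y => le_max_left _ _
  have hsnn : ∀ j y, 0 ≤ s j y := fun j y => Finset.sum_nonneg (fun k _ => norm_nonneg _)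
  have hφ1 : ∀ j, φf j (b j) = 1 := by
    intro j
    have h0 : s j (b j) = 0 := Finset.sum_eq_zero (fun k _ => by simp)
    simp [hφf, h0]
  have hsupp : ∀ j y k, k ≤ j → φf j y ≠ 0 → ‖χ k y - χ k (b j)‖ < ((2:ℝ)^(j+1))⁻¹ := by
    intro j y k hk hne
    have hpos : 0 < 1 - 2^(j+1) * s j y := by
      rcases lt_or_ge 0 (1 - 2^(j+1) * s j y) with h | h
      · exact h
      · exact absurd (max_eq_left h) hne
    have h2 : (0:ℝ) < 2^(j+1) := by positivity
    have hslt : s j y < ((2:ℝ)^(j+1))⁻¹ := by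
      rw [inv_eq_one_div, lt_div_iff₀ h2]
      nlinarith
    have hterm : ‖χ k y - χ k (b j)‖ ≤ s j y :=
      Finset.single_le_sum (f := fun i => ‖χ i y - χ i (b j)‖) (fun i _ => norm_nonneg _)
        (Finset.mem_range.mpr (Nat.lt_succ_of_le hk))
    linarith
  have hloc : ∀ x : X, ∃ (U : Set X) (M : ℕ), IsOpen U ∧ x ∈ U ∧
      ∀ y ∈ U, ∀ j, M ≤ j → φf j y = 0 := by
    intro x
    obtain ⟨k, ε, J, hε, hJ⟩ := hP x
    obtain ⟨m, hm⟩ := exists_pow_lt_of_lt_one (half_pos hε) (by norm_num : (1:ℝ)/2 < 1)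
    refine ⟨{y | ‖χ k y - χ k x‖ < ε/2}, max (max J (k+1)) m, ?_, ?_, ?_⟩
    · exact isOpen_lt ((hχ k).sub continuous_const).norm continuous_const
    · show ‖χ k x - χ k x‖ < ε/2
      simp [half_pos hε]
    · intro y hy j hj
      by_contra hne
      have hkj : k ≤ j := by omega
      have h1 := hsupp j y k hkj hne
      have h2 : ((2:ℝ)^(j+1))⁻¹ ≤ ε/2 := by
        have hmj : m ≤ j + 1 := by omega
        have hle : (2:ℝ)^m ≤ 2^(j+1) := pow_le_pow_right₀ one_le_two hmj
        have : ((2:ℝ)^(j+1))⁻¹ ≤ ((2:ℝ)^m)⁻¹ := by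
          apply inv_anti₀ (by positivity) hle
        refine le_trans this (le_trans (le_of_eq ?_) hm.le)
        rw [one_div, inv_pow]
      have h3 : ε ≤ ‖χ k (b j) - χ k x‖ := hJ j (by omega)
      have h4 : ‖χ k (b j) - χ k x‖ ≤ ‖χ k (b j) - χ k y‖ + ‖χ k y - χ k x‖ := by
        have := dist_triangle (χ k (b j)) (χ k y) (χ k x)
        simpa [dist_eq_norm] using this
      have h5 : ‖χ k (b j) - χ k y‖ = ‖χ k y - χ k (b j)‖ := norm_sub_rev _ _
      have hylt : ‖χ k y - χ k x‖ < ε/2 := hy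
      linarith
  set f : X → ℝ := fun y => ∑' (j : ℕ), (j:ℝ) * φf j y with hf
  have hrepr : ∀ (U : Set X) (M : ℕ), (∀ y ∈ U, ∀ j, M ≤ j → φf j y = 0) →
      ∀ y ∈ U, f y = ∑ j ∈ Finset.range M, (j:ℝ) * φf j y := by
    intro U M hU y hy
    refine tsum_eq_sum (fun j hj => ?_)
    rw [hU y hy j (le_of_not_gt (fun hlt => hj (Finset.mem_range.mpr hlt))), mul_zero]
  have hcont : Continuous f := by
    rw [continuous_iff_continuousAt]
    intro x
    obtain ⟨U, M, hUopen, hxU, hU⟩ := hloc x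
    have hev : f =ᶠ[nhds x] (fun y => ∑ j ∈ Finset.range M, (j:ℝ) * φf j y) := by
      filter_upwards [hUopen.mem_nhds hxU] with y hy using hrepr U M hU y hy
    exact ContinuousAt.congr
      ((continuous_finset_sum _ (fun j _ => continuous_const.mul (hφcont j))).continuousAt)
      hev.symm
  have hbound := hFB f hcont
  rw [isBounded_iff_forall_norm_le] at hbound
  obtain ⟨C, hC⟩ := hbound
  obtain ⟨i, hi⟩ := exists_nat_gt C
  have hsum : Summable (fun j : ℕ => (j:ℝ) * φf j (b i)) := by
    obtain ⟨U, M, _, hxU, hU⟩ := hloc (b i)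
    refine summable_of_ne_finset_zero (s := Finset.range M) (fun j hj => ?_)
    rw [hU (b i) hxU j (le_of_not_gt (fun hlt => hj (Finset.mem_range.mpr hlt))), mul_zero]
  have hge : (i:ℝ) ≤ f (b i) := by
    have h := Summable.le_tsum hsum i (fun (j : ℕ) _ => mul_nonneg (Nat.cast_nonneg j) (hφ0 j (b i)))
    rwa [hφ1 i, mul_one] at h
  have hCi := hC (f (b i)) ⟨b i, hbE i, rfl⟩
  rw [Real.norm_eq_abs] at hCi
  have : f (b i) ≤ C := le_trans (le_abs_self _) hCi
  linarith


/-- Let `H` be an open subgroup of a maximally almost periodic abelian topological group `X`,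
and let `E` be a subset of `X` that is functionally bounded in `X⁺` (`X` with the weak
topology `σ(X, X̂)`). Then `E` is contained in a finite union of cosets of `H`: there is a
finite set `F ⊆ X` with `E ⊆ F + H`. -/
theorem functionallyBounded_subset_finite_cosets {X : Type*} [AddCommGroup X]
    [TopologicalSpace X] [IsTopologicalAddGroup X] (hMAP : MAPGroup X) (H : AddSubgroup X)
    (hH : IsOpen (H : Set X)) (E : Set X)
    (hE : FunctionallyBoundedIn (weakTopology X) E) :
    ∃ F : Finset X, E ⊆ ↑F + (H : Set X) := by
  classical
  by_contra hnot
  push_neg at hnot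
  have hpick : ∀ F : Finset X, ∃ e, e ∈ E ∧ e ∉ ((F : Set X) + (H : Set X)) :=
    fun F => Set.not_subset.mp (hnot F)
  choose pick hpickE hpickN using hpick
  set S : ℕ → Finset X := fun n => Nat.rec ∅ (fun _ Sn => insert (pick Sn) Sn) n with hS
  set x : ℕ → X := fun n => pick (S n) with hx
  have hSsucc : ∀ n, S (n+1) = insert (x n) (S n) := fun n => rfl
  have hSmono : ∀ m n : ℕ, m ≤ n → S m ⊆ S n := by
    intro m n h
    induction n, h using Nat.le_induction with
    | base => exact Finset.Subset.refl _
    | succ n hmn ih =>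
      rw [hSsucc]
      exact ih.trans (Finset.subset_insert _ _)
  have hxS : ∀ m n : ℕ, m < n → x m ∈ S n := by
    intro m n h
    apply hSmono (m+1) n h
    rw [hSsucc]
    exact Finset.mem_insert_self _ _
  have hxE : ∀ n, x n ∈ E := fun n => hpickE _
  have hxd : ∀ m n : ℕ, m < n →
      QuotientAddGroup.mk' H (x n) ≠ QuotientAddGroup.mk' H (x m) := by
    intro m n h heq
    obtain ⟨z, hz, hzz⟩ := (QuotientAddGroup.mk'_eq_mk' H).mp heq
    apply hpickN (S n)
    refine Set.mem_add.mpr ⟨x m, ?_, -z, H.neg_mem hz, ?_⟩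
    · exact hxS m n h
    · rw [← hzz]; abel
  have hxd' : ∀ m n : ℕ, m ≠ n →
      QuotientAddGroup.mk' H (x m) ≠ QuotientAddGroup.mk' H (x n) := by
    intro m n hmn
    rcases lt_or_gt_of_ne hmn with h | h
    · exact (hxd m n h).symm
    · exact hxd n m h
  obtain ⟨ρ, hρH, hρinj⟩ := exists_rho H x hxd'
  obtain ⟨enum, henum⟩ := exists_surjective_nat (VV H x)
  -- diagonalization over the countable group `VV H x`
  have key : ∀ (v : VV H x) (sp : {g : ℕ → ℕ // StrictMono g}),
      ∃ (sp' : {g : ℕ → ℕ // StrictMono g}) (ψ : VV H x →+ UnitAddCircle) (ε : ℝ),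
        0 < ε ∧ (∀ j, ∃ i, sp'.1 j = sp.1 i) ∧ ∀ j, ε ≤ ‖ψ (ρ (x (sp'.1 j)) - v)‖ := by
    intro v sp
    have hinj : Function.Injective (fun j => ρ (x (sp.1 j)) - v) := by
      intro a b hab
      simp only [sub_left_inj] at hab
      exact sp.2.injective (hρinj hab)
    obtain ⟨ψ, ε, φ, hε, hφmono, hφ⟩ := exists_char_escape _ hinj
    exact ⟨⟨sp.1 ∘ φ, sp.2.comp hφmono⟩, ψ, ε, hε, fun j => ⟨φ j, rfl⟩, fun j => hφ j⟩
  choose step stepψ stepε hstepε hsteprange hstepdef using key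
  set seq : ℕ → {g : ℕ → ℕ // StrictMono g} :=
    fun k => Nat.rec ⟨id, strictMono_id⟩ (fun k sp => step (enum k) sp) k with hseq
  have hseqsucc : ∀ k, seq (k+1) = step (enum k) (seq k) := fun k => rfl
  have hnest : ∀ (k m : ℕ), k ≤ m → ∀ j, ∃ i, (seq m).1 j = (seq k).1 i := by
    intro k m h
    induction m, h using Nat.le_induction with
    | base => exact fun j => ⟨j, rfl⟩
    | succ m hkm ih =>
      intro j
      obtain ⟨i', hi'⟩ := hsteprange (enum m) (seq m) j
      rw [hseqsucc] at *
      obtain ⟨i, hi⟩ := ih i'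
      exact ⟨i, by rw [hi'] at *; exact hi ▸ rfl⟩
  set d : ℕ → ℕ := fun j => (seq j).1 j with hd
  set b : ℕ → X := fun j => x (d j) with hb
  have hdef : ∀ k j, k + 1 ≤ j →
      stepε (enum k) (seq k) ≤ ‖stepψ (enum k) (seq k) (ρ (b j) - enum k)‖ := by
    intro k j hkj
    obtain ⟨i, hi⟩ := hnest (k+1) j hkj j
    have h := hstepdef (enum k) (seq k) i
    rw [← hseqsucc k] at h
    have hdj : d j = (seq (k+1)).1 i := hi
    show stepε (enum k) (seq k) ≤ ‖stepψ (enum k) (seq k) (ρ (x (d j)) - enum k)‖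
    rw [hdj]
    exact h
  set χ : ℕ → X →+ UnitAddCircle := fun k => (stepψ (enum k) (seq k)).comp ρ with hχdef
  have hχcont : ∀ k, Continuous ⇑(χ k) := by
    intro k
    apply continuous_of_vanishing_on_open H hH
    intro h hh
    show stepψ (enum k) (seq k) (ρ h) = 0
    rw [hρH h hh, map_zero]
  have hχw : ∀ k, @Continuous X UnitAddCircle (weakTopology X) _ ⇑(χ k) :=
    fun k => weak_continuous (χ k) (hχcont k)
  have hP : ∀ x' : X, ∃ k ε J, 0 < ε ∧ ∀ j, J ≤ j → ε ≤ ‖χ k (b j) - χ k x'‖ := by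
    intro x'
    obtain ⟨k, hk⟩ := henum (ρ x')
    refine ⟨k, stepε (enum k) (seq k), k+1, hstepε _ _, fun j hj => ?_⟩
    have h := hdef k j hj
    have harg : ρ (b j) - enum k = ρ (b j) - ρ x' := by rw [hk]
    have heq : χ k (b j) - χ k x' = stepψ (enum k) (seq k) (ρ (b j) - enum k) := by
      rw [harg, map_sub]
      rfl
    rw [heq]
    exact h
  exact @aux_unbounded X _ (weakTopology X) χ hχw b E (fun j => hxE _) hP hE
end

section
/- Let X be an abelian topological group and let E be a subset of c₀(X). If the sequence of coordinate projections {πₙ(E)}ₙ is not a null-sequence of subsets of X (i.e., there is a neighborhood U of 0 in X with πₙ(E) ⊄ U for infinitely many n), then there exist a neighborhood V of 0 in X and an injective sequence (bₖ) in E such that for all k ≠ m the difference bₘ − bₖ has some coordinate outside V; in particular E contains an infinite uniformly discrete subset of F₀(X). -/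
open Filter Topology Set

/-- Let `X` be an abelian topological group and let `E` be a subset of `c₀(X)`. If the
sequence of coordinate projections `{πₙ(E)}ₙ` is not a null-sequence of subsets of `X`
(i.e. there is a neighborhood `U` of `0` in `X` with `πₙ(E) ⊄ U` for infinitely many `n`),
then there exist a neighborhood `V` of `0` in `X` and an injective sequence `(bₖ)` in `E`
such that for all `k ≠ m` the difference `bₘ − bₖ` has some coordinate outside `V`; in
particular `E` contains an infinite uniformly discrete subset of `F₀(X)`. -/
theorem infinite_uniformly_discrete_of_not_null_sequence {X : Type*} [AddCommGroup X]
    [TopologicalSpace X] [IsTopologicalAddGroup X] (E : Set (c0 X))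
    (h : ∃ U ∈ 𝓝 (0 : X), {n : ℕ | ¬ (fun x : c0 X => (x : ℕ → X) n) '' E ⊆ U}.Infinite) :
    ∃ V ∈ 𝓝 (0 : X), ∃ b : ℕ → c0 X, Function.Injective b ∧ (∀ k, b k ∈ E) ∧
      (∀ k m : ℕ, k ≠ m → ∃ n : ℕ, ((b m : ℕ → X) n) - ((b k : ℕ → X) n) ∉ V) ∧
      ∃ W ∈ 𝓝 (0 : c0 X), ∀ k m : ℕ, k ≠ m →
        Disjoint ((b k + ·) '' W) ((b m + ·) '' W) := by
  classical
  obtain ⟨U, hU, hInf⟩ := h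
  obtain ⟨V₀, hV₀, hVadd⟩ := exists_nhds_zero_half hU
  set V : Set X := V₀ ∩ (Neg.neg ⁻¹' V₀) with hVdef
  have hV : V ∈ 𝓝 (0 : X) := by
    refine Filter.inter_mem hV₀ ?_
    have : Tendsto (Neg.neg : X → X) (𝓝 0) (𝓝 (0 : X)) := by
      simpa using (continuous_neg : Continuous (Neg.neg : X → X)).tendsto (0 : X)
    exact this hV₀
  -- construct the sequence
  have key : ∀ s : Finset (c0 X × ℕ),
      (∀ p ∈ s, p.1 ∈ E ∧ (p.1 : ℕ → X) p.2 ∉ U) →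
      ∃ q : c0 X × ℕ, (q.1 ∈ E ∧ (q.1 : ℕ → X) q.2 ∉ U) ∧
        ∀ p ∈ s, (p.1 : ℕ → X) q.2 ∈ V := by
    intro s _
    have hev : ∀ᶠ m in atTop, ∀ p ∈ s, (p.1 : ℕ → X) m ∈ V := by
      rw [eventually_all_finset]
      intro p _
      have hp : Tendsto (p.1 : ℕ → X) atTop (𝓝 0) := p.1.2
      exact hp hV
    obtain ⟨N, hN⟩ := eventually_atTop.1 hev
    obtain ⟨n, hnS, hnN⟩ := hInf.exists_gt N
    have : ¬ (fun x : c0 X => (x : ℕ → X) n) '' E ⊆ U := hnS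
    obtain ⟨a, ⟨x, hxE, rfl⟩, haU⟩ := not_subset.1 this
    exact ⟨(x, n), ⟨hxE, haU⟩, fun p hp => hN n hnN.le p hp⟩
  obtain ⟨f, hfP, hfr⟩ := exists_seq_of_forall_finset_exists
    (fun p : c0 X × ℕ => p.1 ∈ E ∧ (p.1 : ℕ → X) p.2 ∉ U)
    (fun p q => (p.1 : ℕ → X) q.2 ∈ V)
    (fun s hs => key s hs)
  set b : ℕ → c0 X := fun k => (f k).1 with hb
  set nn : ℕ → ℕ := fun k => (f k).2 with hnn
  have hbE : ∀ k, b k ∈ E := fun k => (hfP k).1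
  have hbU : ∀ k, (b k : ℕ → X) (nn k) ∉ U := fun k => (hfP k).2
  have hsmall : ∀ k m, k < m → (b k : ℕ → X) (nn m) ∈ V := fun k m hkm => hfr k m hkm
  have hdiff : ∀ k m : ℕ, k ≠ m → ∃ n : ℕ, ((b m : ℕ → X) n) - ((b k : ℕ → X) n) ∉ V := by
    intro k m hkm
    rcases lt_or_gt_of_ne hkm with hlt | hlt
    · refine ⟨nn m, fun hmem => ?_⟩
      have h1 : (b k : ℕ → X) (nn m) ∈ V₀ := (hsmall k m hlt).1
      have : (b m : ℕ → X) (nn m) ∈ U := by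
        have := hVadd _ hmem.1 _ h1
        simpa [sub_add_cancel] using this
      exact hbU m this
    · refine ⟨nn k, fun hmem => ?_⟩
      have h1 : (b m : ℕ → X) (nn k) ∈ V₀ := (hsmall m k hlt).1
      have h2 : -((b m : ℕ → X) (nn k) - (b k : ℕ → X) (nn k)) ∈ V₀ := hmem.2
      have : (b k : ℕ → X) (nn k) ∈ U := by
        have := hVadd _ h1 _ h2
        simpa [neg_sub] using this
      exact hbU k this
  have hinj : Function.Injective b := by
    intro k m hkm
    by_contra hne
    obtain ⟨n, hn⟩ := hdiff k m hne
    apply hn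
    rw [hkm, sub_self]
    exact mem_of_mem_nhds hV
  refine ⟨V, hV, b, hinj, hbE, hdiff, ?_⟩
  -- uniform discreteness
  obtain ⟨W₀, hW₀, hWadd⟩ := exists_nhds_zero_half hV
  set W₁ : Set X := W₀ ∩ (Neg.neg ⁻¹' W₀) with hW₁def
  have hW₁ : W₁ ∈ 𝓝 (0 : X) := by
    refine Filter.inter_mem hW₀ ?_
    have : Tendsto (Neg.neg : X → X) (𝓝 0) (𝓝 (0 : X)) := by
      simpa using (continuous_neg : Continuous (Neg.neg : X → X)).tendsto (0 : X)
    exact this hW₀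
  set W : Set (c0 X) := {x : c0 X | ∀ n, (x : ℕ → X) n ∈ W₁} with hWdef
  have hWnhds : W ∈ 𝓝 (0 : c0 X) := by
    letI : UniformSpace X := IsTopologicalAddGroup.rightUniformSpace X
    haveI : IsUniformAddGroup X := isUniformAddGroup_of_addCommGroup
    rw [show (F0Topology X) = TopologicalSpace.induced
        (fun x : c0 X => UniformFun.ofFun (x : ℕ → X)) inferInstance from rfl, nhds_induced]
    refine Filter.mem_comap.2 ⟨{g : UniformFun ℕ X |
        (UniformFun.ofFun ((0 : c0 X) : ℕ → X), g) ∈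
          UniformFun.gen ℕ X {p : X × X | p.2 - p.1 ∈ W₁}}, ?_, ?_⟩
    · refine (UniformFun.hasBasis_nhds ℕ X _).mem_of_mem ?_
      rw [uniformity_eq_comap_nhds_zero X]
      exact Filter.preimage_mem_comap hW₁
    · intro x hx n
      have := hx n
      simpa using this
  refine ⟨W, hWnhds, fun k m hkm => ?_⟩
  rw [Set.disjoint_left]
  rintro y ⟨w, hw, rfl⟩ ⟨w', hw', hyw⟩
  obtain ⟨n, hn⟩ := hdiff k m hkm
  apply hn
  have heq : (b m : ℕ → X) n - (b k : ℕ → X) n = (w : ℕ → X) n - (w' : ℕ → X) n := by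
    have : b k + w = b m + w' := hyw.symm
    have h2 : ((b k + w : c0 X) : ℕ → X) n = ((b m + w' : c0 X) : ℕ → X) n := by rw [this]
    simp only [AddSubgroup.coe_add, Pi.add_apply] at h2
    rw [sub_eq_sub_iff_add_eq_add]
    exact h2.symm.trans (add_comm _ _)
  rw [heq]
  have h1 : (w : ℕ → X) n ∈ W₀ := (hw n).1
  have h2 : -((w' : ℕ → X) n) ∈ W₀ := (hw' n).2
  have := hWadd _ h1 _ h2
  simpa [sub_eq_add_neg] using this
end

section
/- Let X be a maximally almost periodic abelian topological group with the SB-property: every sequence in X that is functionally bounded in X⁺ (X with the weak topology σ(X, X̂)) is functionally bounded in X. Then every subset of X that is functionally bounded in X⁺ is precompact (totally bounded) in X. -/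
open Filter Topology Set Pointwise

open NNReal in
/-- Bump function in a topological abelian group: for any neighborhood `W` of `0` there is a
continuous nonnegative function equal to `1` at `0` and vanishing outside `W`. -/
theorem exists_bump_fn {X : Type*} [AddCommGroup X] [TopologicalSpace X]
    [IsTopologicalAddGroup X] {W : Set X} (hW : W ∈ 𝓝 (0 : X)) :
    ∃ φ : X → ℝ, Continuous φ ∧ φ 0 = 1 ∧ (∀ x, x ∉ W → φ x = 0) ∧ ∀ x, 0 ≤ φ x := by
  classical
  -- Step 1: a "shrinking" operation
  have step : ∀ V : Set X, ∃ V' : Set X, V ∈ 𝓝 (0 : X) →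
      (V' ∈ 𝓝 (0 : X) ∧ (∀ x ∈ V', -x ∈ V') ∧ ∀ a ∈ V', ∀ b ∈ V', ∀ c ∈ V', a + b + c ∈ V) := by
    intro V
    by_cases hV : V ∈ 𝓝 (0 : X)
    · obtain ⟨V1, hV1, h1⟩ := exists_nhds_zero_half hV
      obtain ⟨V2, hV2, h2⟩ := exists_nhds_zero_half hV1
      have h0V2 : (0 : X) ∈ V2 := mem_of_mem_nhds hV2
      refine ⟨V2 ∩ (-V2), fun _ => ⟨?_, ?_, ?_⟩⟩
      · exact Filter.inter_mem hV2 (by simpa using neg_mem_nhds_zero X hV2)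
      · rintro x ⟨hx1, hx2⟩
        exact ⟨by simpa using hx2, by simpa using hx1⟩
      · rintro a ⟨ha, -⟩ b ⟨hb, -⟩ c ⟨hc, -⟩
        have hab : a + b ∈ V1 := h2 a ha b hb
        have hc' : c + 0 ∈ V1 := h2 c hc 0 h0V2
        rw [add_zero] at hc'
        exact h1 _ hab _ hc'
    · exact ⟨∅, fun h => absurd h hV⟩
  choose f hf using step
  -- Step 2: the sequence of neighborhoods
  set Ws : ℕ → Set X := fun n => f^[n] (f W) with hWs
  have hWmem : ∀ n, Ws n ∈ 𝓝 (0 : X) := by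
    intro n
    induction n with
    | zero => exact (hf W hW).1
    | succ n ih =>
        show f^[n+1] (f W) ∈ 𝓝 (0 : X)
        rw [Function.iterate_succ_apply']
        exact (hf _ ih).1
  have hWsucc : ∀ n, Ws (n + 1) = f (Ws n) := fun n => Function.iterate_succ_apply' f n (f W)
  have hWsym : ∀ n, ∀ x ∈ Ws n, -x ∈ Ws n := by
    intro n
    cases n with
    | zero => exact (hf W hW).2.1
    | succ n => rw [hWsucc]; exact (hf _ (hWmem n)).2.1
  have hWtriple : ∀ n, ∀ a ∈ Ws (n + 1), ∀ b ∈ Ws (n + 1), ∀ c ∈ Ws (n + 1),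
      a + b + c ∈ Ws n := by
    intro n
    rw [hWsucc]
    exact (hf _ (hWmem n)).2.2
  have hW0sub : Ws 0 ⊆ W := by
    intro a ha
    have := (hf W hW).2.2 a ha 0 (mem_of_mem_nhds (hf W hW).1) 0 (mem_of_mem_nhds (hf W hW).1)
    simpa using this
  have hWanti : ∀ {m n : ℕ}, m ≤ n → Ws n ⊆ Ws m := by
    have h1 : ∀ n, Ws (n + 1) ⊆ Ws n := by
      intro n a ha
      have h0 : (0 : X) ∈ Ws (n + 1) := mem_of_mem_nhds (hWmem (n + 1))
      simpa using hWtriple n a ha 0 h0 0 h0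
    intro m n h
    exact antitone_nat_of_succ_le (fun k => h1 k) h
  -- Step 3: the pre-distance
  set U : ℕ → Set (X × X) := fun n => {p : X × X | p.2 - p.1 ∈ Ws n} with hUdef
  have hU_symm : ∀ n, Prod.swap ⁻¹' (U n) = U n := by
    intro n
    ext ⟨a, b⟩
    constructor
    · intro h
      have := hWsym n _ h
      simpa [hUdef, neg_sub] using this
    · intro h
      have := hWsym n _ h
      simpa [hUdef, neg_sub] using this
  have hUanti : ∀ {m n : ℕ}, m ≤ n → U n ⊆ U m := fun {m n} h p hp => hWanti h hp
  set d : X → X → ℝ≥0 := fun x y => if h : ∃ n, (x, y) ∉ U n then (1 / 2) ^ Nat.find h else 0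
    with hd_def
  have hd_self : ∀ x : X, d x x = 0 := by
    intro x
    have : ¬∃ n, (x, x) ∉ U n := by
      push_neg
      intro n
      show x - x ∈ Ws n
      simpa using mem_of_mem_nhds (hWmem n)
    simp only [hd_def, dif_neg this]
  have hd_symm : ∀ x y, d x y = d y x := by
    intro x y
    have hc : ∀ n, (x, y) ∈ U n ↔ (y, x) ∈ U n := fun n => Set.ext_iff.mp (hU_symm n) (y, x)
    simp only [hd_def, hc]
  have hr : (1 / 2 : ℝ≥0) ∈ Set.Ioo (0 : ℝ≥0) 1 := ⟨half_pos one_pos, NNReal.half_lt_self one_ne_zero⟩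
  letI I := PseudoMetricSpace.ofPreNNDist d hd_self hd_symm
  have hdist_le : ∀ x y, dist x y ≤ d x y := PseudoMetricSpace.dist_ofPreNNDist_le _ _ _
  have hle_d : ∀ {x y : X} {n : ℕ}, (1 / 2 : ℝ≥0) ^ n ≤ d x y ↔ (x, y) ∉ U n := by
    intro x y n
    simp only [hd_def]
    split_ifs with h
    · rw [(pow_right_strictAnti₀ hr.1 hr.2).le_iff_ge, Nat.find_le_iff]
      exact ⟨fun ⟨m, hmn, hm⟩ hn => hm (hUanti hmn hn), fun h => ⟨n, le_rfl, h⟩⟩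
    · push_neg at h
      simp only [h n, not_true, (pow_pos hr.1 _).not_ge]
  have hd_le : ∀ x y : X, ↑(d x y) ≤ 2 * dist x y := by
    refine PseudoMetricSpace.le_two_mul_dist_ofPreNNDist _ _ _ fun x₁ x₂ x₃ x₄ => ?_
    by_cases H : ∃ n, (x₁, x₄) ∉ U n
    · refine (dif_pos H).trans_le ?_
      rw [← div_le_iff₀' zero_lt_two, ← mul_one_div (_ ^ _), ← pow_succ]
      simp only [le_max_iff, hle_d, ← not_and_or]
      rintro ⟨h₁₂, h₂₃, h₃₄⟩
      refine Nat.find_spec H ?_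
      have heq : x₄ - x₁ = (x₂ - x₁) + (x₃ - x₂) + (x₄ - x₃) := by abel
      have hm := hWtriple (Nat.find H) _ h₁₂ _ h₂₃ _ h₃₄
      rw [← heq] at hm
      exact hm
    · exact (dif_neg H).trans_le (zero_le (a := _))
  -- Step 4: the bump function
  set D : X → ℝ := fun x => dist (0 : X) x with hD_def
  have hD_cont : Continuous D := by
    rw [continuous_iff_continuousAt]
    intro x
    rw [ContinuousAt, Metric.tendsto_nhds]
    intro ε hε
    obtain ⟨n, hn⟩ := exists_pow_lt_of_lt_one hε (by norm_num : (1 / 2 : ℝ) < 1)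
    have hmem : (fun y => y - x) ⁻¹' Ws n ∈ 𝓝 x := by
      have hc : Continuous fun y : X => y - x := continuous_id.sub continuous_const
      have := hc.continuousAt (x := x)
      apply this.preimage_mem_nhds
      simpa using hWmem n
    filter_upwards [hmem] with y hy
    have hxy : (x, y) ∈ U n := hy
    have hdlt : (d x y : ℝ) < (1 / 2 : ℝ) ^ n := by
      have h1 : ¬((1 / 2 : ℝ≥0) ^ n ≤ d x y) := fun hle => (hle_d.1 hle) hxy
      push_neg at h1
      have := NNReal.coe_lt_coe.2 h1
      simpa [NNReal.coe_pow] using this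
    have htri : dist (D y) (D x) ≤ dist x y := by
      rw [Real.dist_eq]
      have h := abs_dist_sub_le y x (0 : X)
      rw [dist_comm y (0 : X), dist_comm x (0 : X), dist_comm y x] at h
      exact h
    calc dist (D y) (D x) ≤ dist x y := htri
      _ ≤ d x y := hdist_le x y
      _ < (1 / 2 : ℝ) ^ n := hdlt
      _ < ε := hn
  refine ⟨fun x => max (1 - 2 * D x) 0, ?_, ?_, ?_, fun x => le_max_right _ _⟩
  · exact ((continuous_const.sub (continuous_const.mul hD_cont)).max continuous_const)
  · have : D 0 = 0 := dist_self 0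
    simp [this]
  · intro x hx
    have hx0 : x ∉ Ws 0 := fun h => hx (hW0sub h)
    have hU0 : (0, x) ∉ U 0 := by
      show ¬(x - 0 ∈ Ws 0)
      simpa using hx0
    have h1 : (1 : ℝ≥0) ≤ d 0 x := by simpa using hle_d.2 hU0
    have h2 : (1 : ℝ) ≤ 2 * D x := by
      calc (1 : ℝ) ≤ d 0 x := by exact_mod_cast h1
        _ ≤ 2 * dist (0 : X) x := hd_le 0 x
    have : 1 - 2 * D x ≤ 0 := by linarith
    exact max_eq_right this


/-- Let `X` be a maximally almost periodic abelian topological group with the SB-property: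
every sequence in `X` that is functionally bounded in `X⁺` (`X` with the weak topology
`σ(X, X̂)`) is functionally bounded in `X`. Then every subset of `X` that is functionally
bounded in `X⁺` is precompact (totally bounded) in `X`. -/
theorem precompact_of_functionallyBounded_weak {X : Type*} [AddCommGroup X]
    [TopologicalSpace X] [IsTopologicalAddGroup X] (hMAP : MAPGroup X)
    (hSB : ∀ u : ℕ → X, FunctionallyBoundedIn (weakTopology X) (Set.range u) →
      FunctionallyBoundedIn ‹TopologicalSpace X› (Set.range u))
    (E : Set X) (hE : FunctionallyBoundedIn (weakTopology X) E) :
    ∀ U ∈ 𝓝 (0 : X), ∃ F : Finset X, E ⊆ ↑F + U := by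
  intro U hU
  by_contra hcontra
  push_neg at hcontra
  have hcon : ∀ F : Finset X, ¬ E ⊆ ↑F + U := fun F => by
    intro h
    exact (hcontra F) h
  have hSB2 : ∀ u : ℕ → X, (∀ n, u n ∈ E) →
      ∀ f : X → ℝ, Continuous f → Bornology.IsBounded (f '' Set.range u) := by
    intro u huE f hf
    have hw : FunctionallyBoundedIn (weakTopology X) (Set.range u) := by
      intro g hg
      exact (hE g hg).subset (Set.image_mono (Set.range_subset_iff.mpr huE))
    exact hSB u hw f hf

  classical
  -- symmetric W with W+W+W+W ⊆ U
  obtain ⟨V1, hV1, h1⟩ := exists_nhds_zero_half hU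
  obtain ⟨V2, hV2, h2⟩ := exists_nhds_zero_half hV1
  set W : Set X := V2 ∩ (-V2) with hWdef
  have hWnhds : W ∈ 𝓝 (0 : X) := Filter.inter_mem hV2 (by simpa using neg_mem_nhds_zero X hV2)
  have hWsym : ∀ x ∈ W, -x ∈ W := by
    rintro x ⟨hx1, hx2⟩
    exact ⟨by simpa using hx2, by simpa using hx1⟩
  have hWV2 : W ⊆ V2 := Set.inter_subset_left
  have hW4 : ∀ a ∈ W, ∀ b ∈ W, ∀ c ∈ W, ∀ e ∈ W, a + b + c + e ∈ U := by
    intro a ha b hb c hc e he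
    have h12 : a + b ∈ V1 := h2 a (hWV2 ha) b (hWV2 hb)
    have h34 : c + e ∈ V1 := h2 c (hWV2 hc) e (hWV2 he)
    have := h1 _ h12 _ h34
    rwa [← add_assoc] at this
  have hWU : W ⊆ U := by
    intro a ha
    have h0 : (0 : X) ∈ W := mem_of_mem_nhds hWnhds
    simpa using hW4 a ha 0 h0 0 h0 0 h0
  -- the uniformly discrete sequence
  have hpick : ∀ F : Finset X, ∃ x, x ∈ E ∧ x ∉ (↑F : Set X) + U := by
    intro F
    obtain ⟨x, hx1, hx2⟩ := Set.not_subset.mp (hcon F)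
    exact ⟨x, hx1, hx2⟩
  choose pick hpickE hpickU using hpick
  set Fs : ℕ → Finset X := fun n => Nat.rec ∅ (fun _ F => insert (pick F) F) n with hFs
  set u : ℕ → X := fun n => pick (Fs n) with hu
  have hFsucc : ∀ n, Fs (n + 1) = insert (u n) (Fs n) := fun n => rfl
  have hmemFs : ∀ m n, m < n → u m ∈ Fs n := by
    intro m n h
    induction n with
    | zero => omega
    | succ n ih =>
        rw [hFsucc]
        rcases Nat.lt_succ_iff_lt_or_eq.mp h with h' | h'
        · exact Finset.mem_insert_of_mem (ih h')
        · subst h'; exact Finset.mem_insert_self _ _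
  have hdiff : ∀ m n, m < n → u n - u m ∉ U := by
    intro m n h hmem
    apply hpickU (Fs n)
    refine ⟨u m, by exact_mod_cast hmemFs m n h, u n - u m, hmem, ?_⟩
    show u m + (u n - u m) = u n
    abel
  have hsep : ∀ m n, m ≠ n → u n - u m ∉ W := by
    intro m n hne hmem
    rcases lt_or_gt_of_ne hne with h | h
    · exact hdiff m n h (hWU hmem)
    · exact hdiff n m h (hWU (by simpa [neg_sub] using hWsym _ hmem))
  -- the bump functions
  obtain ⟨φ, hφc, hφ0, hφz, hφnn⟩ := exists_bump_fn hWnhds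
  set g : ℕ → X → ℝ := fun n x => n * φ (x - u n) with hg
  have hgc : ∀ n, Continuous (g n) :=
    fun n => continuous_const.mul (hφc.comp (continuous_id.sub continuous_const))
  have hgsupp : ∀ n, Function.support (g n) ⊆ {x | x - u n ∈ W} := by
    intro n x hx
    by_contra hxn
    exact hx (by simp [hg, hφz _ hxn])
  have hlf : LocallyFinite fun n => Function.support (g n) := by
    intro x
    refine ⟨(fun y => y - x) ⁻¹' W, ?_, ?_⟩
    · exact (continuous_id.sub continuous_const).continuousAt.preimage_mem_nhds
        (by simpa using hWnhds)
    · have key : ∀ k l : ℕ,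
          (Function.support (g k) ∩ (fun y => y - x) ⁻¹' W).Nonempty →
          (Function.support (g l) ∩ (fun y => y - x) ⁻¹' W).Nonempty → k < l → False := by
        rintro k l ⟨y, hy1, hy2⟩ ⟨z, hz1, hz2⟩ hkl
        have hyk : y - u k ∈ W := hgsupp k hy1
        have hzl : z - u l ∈ W := hgsupp l hz1
        have hyx : y - x ∈ W := hy2
        have hzx : z - x ∈ W := hz2
        have : u l - u k = (-(z - u l)) + (z - x) + (-(y - x)) + (y - u k) := by abel
        have hmem : u l - u k ∈ U := by
          rw [this]
          exact hW4 _ (hWsym _ hzl) _ hzx _ (hWsym _ hyx) _ hyk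
        exact hdiff k l hkl hmem
      apply Set.Finite.subset (Set.finite_singleton
        (if h : ∃ k, (Function.support (g k) ∩ (fun y => y - x) ⁻¹' W).Nonempty
          then h.choose else 0))
      intro l hl
      by_cases h : ∃ k, (Function.support (g k) ∩ (fun y => y - x) ⁻¹' W).Nonempty
      · simp only [dif_pos h, Set.mem_singleton_iff]
        rcases lt_trichotomy l h.choose with h' | h' | h'
        · exact absurd (key l h.choose hl h.choose_spec h') id
        · exact h'
        · exact absurd (key h.choose l h.choose_spec hl h') id
      · exact absurd ⟨l, hl⟩ h
  set F : X → ℝ := fun x => ∑ᶠ n, g n x with hF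
  have hFc : Continuous F := continuous_finsum hgc hlf
  have hFval : ∀ n : ℕ, F (u n) = n := by
    intro n
    have : ∀ m : ℕ, m ≠ n → g m (u n) = 0 := by
      intro m hm
      have := hsep m n hm
      simp [hg, hφz _ this]
    rw [hF]
    calc ∑ᶠ m, g m (u n) = g n (u n) := finsum_eq_single (fun m => g m (u n)) n this
      _ = n := by simp [hg, hφ0]
  have huE : ∀ n, u n ∈ E := fun n => hpickE (Fs n)
  have hbd := hSB2 u huE F hFc
  obtain ⟨C, hC⟩ := isBounded_iff_forall_norm_le.mp hbd
  set n : ℕ := ⌈C⌉₊ + 1 with hn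
  have h1 := hC (F (u n)) ⟨u n, Set.mem_range_self n, rfl⟩
  rw [hFval n] at h1
  have h2 : (n : ℝ) ≤ C := le_trans (le_abs_self _) h1
  have h3 : C < n := by
    calc C ≤ ⌈C⌉₊ := Nat.le_ceil C
      _ < (n : ℝ) := by exact_mod_cast Nat.lt_succ_self _
  linarith
end

section
/- Let X be a complete maximally almost periodic abelian topological group with the SB-property. Then X respects compactness (a subset of X is compact in X if and only if it is compact in X⁺), and X⁺ is a μ-space: every subset of X functionally bounded in X⁺ has compact closure in X⁺ (indeed its closure in X is compact in X). -/
open Filter Topology Set Pointwise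
open scoped Uniformity SetRel

/-- An abelian topological group is complete (with respect to its group uniformity) if every
nontrivial Cauchy filter converges. -/
def GroupComplete (X : Type*) [AddCommGroup X] [TopologicalSpace X] : Prop :=
  ∀ F : Filter X, F.NeBot →
    (∀ V ∈ 𝓝 (0 : X), ∃ S ∈ F, ∀ x ∈ S, ∀ y ∈ S, y - x ∈ V) →
    ∃ x : X, F ≤ 𝓝 x

lemma exists_unbounded_function {Z : Type*} [TopologicalSpace Z]
    (d : Z → Z → ℝ) (hd : Continuous fun p : Z × Z => d p.1 p.2)
    (hsymm : ∀ x y, d x y = d y x) (htri : ∀ x y z, d x z ≤ d x y + d y z)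
    (hself : ∀ x, d x x = 0)
    (u : ℕ → Z) (c : ℝ) (hc : 0 < c)
    (hsep : ∀ m n, m ≠ n → c ≤ d (u m) (u n)) :
    ∃ f : Z → ℝ, Continuous f ∧ ∀ n, f (u n) = n := by
  set φ : ℕ → Z → ℝ := fun n x => (n : ℝ) * max 0 (1 - (4 / c) * d x (u n)) with hφ
  have hφcont : ∀ n, Continuous (φ n) := by
    intro n
    exact continuous_const.mul (continuous_const.max (continuous_const.sub
      (continuous_const.mul (hd.comp (continuous_id.prodMk continuous_const)))))
  have hφzero : ∀ n x, c / 4 ≤ d x (u n) → φ n x = 0 := by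
    intro n x h
    have h1 : (1 : ℝ) - (4 / c) * d x (u n) ≤ 0 := by
      have h2 : (1 : ℝ) ≤ (4 / c) * d x (u n) := by
        rw [div_mul_eq_mul_div, le_div_iff₀ hc]
        nlinarith
      linarith
    simp [hφ, max_eq_left h1]
  have hballmem : ∀ x : Z, {y | d x y < c / 4} ∈ 𝓝 x := by
    intro x
    have hcx : Continuous fun y => d x y := hd.comp (continuous_const.prodMk continuous_id)
    have h0 : d x x < c / 4 := by rw [hself]; linarith
    exact hcx.continuousAt.preimage_mem_nhds (Iio_mem_nhds h0)
  refine ⟨fun x => ∑' n, φ n x, ?_, ?_⟩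
  · rw [continuous_iff_continuousAt]
    intro x
    by_cases h : ∃ n, d x (u n) < c / 2
    · obtain ⟨n, hn⟩ := h
      have huniq : ∀ m, d x (u m) < c / 2 → m = n := by
        intro m hm
        by_contra hmn
        have h1 := hsep m n hmn
        have h2 := htri (u m) x (u n)
        rw [hsymm (u m) x] at h2
        linarith
      have hev : ∀ y, d x y < c / 4 → (∑' k, φ k y) = φ n y := by
        intro y hy
        refine tsum_eq_single n fun m hm => ?_
        refine hφzero m y ?_
        by_contra hlt
        push_neg at hlt
        have h1 : d x (u m) < c / 2 := lt_of_le_of_lt (htri x y (u m)) (by linarith)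
        exact hm (huniq m h1)
      exact ((hφcont n).continuousAt).congr (by
        filter_upwards [hballmem x] with y hy using (hev y hy).symm)
    · push_neg at h
      have hev : ∀ y, d x y < c / 4 → (∑' k, φ k y) = 0 := by
        intro y hy
        have hz : ∀ k, φ k y = 0 := by
          intro k
          refine hφzero k y ?_
          have h1 := htri x y (u k)
          have h2 := h k
          linarith
        exact (tsum_congr hz).trans tsum_zero
      exact continuousAt_const.congr (by
        filter_upwards [hballmem x] with y hy using (hev y hy).symm)
  · intro n
    have h1 : (∑' k, φ k (u n)) = φ n (u n) := by
      refine tsum_eq_single n fun m hm => ?_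
      refine hφzero m (u n) ?_
      have := hsep n m (Ne.symm hm)
      linarith
    show (∑' k, φ k (u n)) = (n:ℝ)
    rw [h1, hφ]
    simp [hself]


lemma exists_group_pseudodist {X : Type*} [AddCommGroup X] [TopologicalSpace X]
    [IsTopologicalAddGroup X] {W : Set X} (hW : W ∈ 𝓝 (0 : X)) :
    ∃ d : X → X → ℝ, (Continuous fun p : X × X => d p.1 p.2) ∧
      (∀ x y, d x y = d y x) ∧ (∀ x y z, d x z ≤ d x y + d y z) ∧ (∀ x, d x x = 0) ∧
      ∃ c > 0, ∀ x y, d x y < c → y - x ∈ W := by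
  classical
  -- a "half-and-symmetrize" step
  have hstep : ∀ V : Set X, V ∈ 𝓝 (0 : X) → ∃ U : Set X, U ∈ 𝓝 (0 : X) ∧
      (∀ x ∈ U, -x ∈ U) ∧ (∀ x ∈ U, ∀ y ∈ U, x + y ∈ V) := by
    intro V hV
    obtain ⟨U0, hU0, hU0add⟩ := exists_nhds_zero_half hV
    have hnegmem : (fun x : X => -x) ⁻¹' U0 ∈ 𝓝 (0 : X) :=
      continuous_neg.continuousAt.preimage_mem_nhds (by simpa using hU0)
    refine ⟨U0 ∩ (fun x : X => -x) ⁻¹' U0, inter_mem hU0 hnegmem, ?_, ?_⟩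
    · rintro x ⟨h1, h2⟩
      exact ⟨h2, by simpa using h1⟩
    · rintro x ⟨h1, -⟩ y ⟨h2, -⟩
      exact hU0add x h1 y h2
  choose! next hnext1 hnext2 hnext3 using hstep
  set Wseq : ℕ → Set X := fun k => next^[k] (next W) with hWseq
  have hiter : ∀ k, Wseq (k + 1) = next (Wseq k) := by
    intro k; rw [hWseq]; exact Function.iterate_succ_apply' next k (next W)
  have hmem : ∀ k, Wseq k ∈ 𝓝 (0 : X) := by
    intro k
    induction k with
    | zero => exact hnext1 W hW
    | succ k ih => rw [hiter k]; exact hnext1 _ ih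
  have hsym : ∀ k, ∀ x ∈ Wseq k, -x ∈ Wseq k := by
    intro k
    induction k with
    | zero => exact hnext2 W hW
    | succ k ih => rw [hiter k]; exact hnext2 _ (hmem k)
  have hadd : ∀ k, ∀ x ∈ Wseq (k + 1), ∀ y ∈ Wseq (k + 1), x + y ∈ Wseq k := by
    intro k
    rw [hiter k]
    exact hnext3 _ (hmem k)
  have h0mem : ∀ k, (0 : X) ∈ Wseq k := fun k => mem_of_mem_nhds (hmem k)
  have hsub0 : Wseq 0 ⊆ W := by
    intro x hx
    have := hnext3 W hW x hx 0 (h0mem 0)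
    simpa using this
  set ent : ℕ → Set (X × X) := fun k => {p : X × X | p.2 - p.1 ∈ Wseq k} with hent
  have hdec : ∀ k, ent (k + 1) ⊆ ent k := by
    intro k p hp
    have := hadd k _ hp 0 (h0mem (k + 1))
    show p.2 - p.1 ∈ Wseq k
    simpa using this
  have hanti : Antitone ent := antitone_nat_of_succ_le hdec
  have hdir : Directed (· ≥ ·) ent := hanti.directed_ge
  set F : Filter (X × X) := ⨅ k, 𝓟 (ent k) with hF
  have hFbasis : F.HasBasis (fun _ : ℕ => True) ent := Filter.hasBasis_iInf_principal hdir
  have hFmem : ∀ k, ent k ∈ F := fun k => mem_iInf_of_mem k (mem_principal_self _)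
  have hrefl : 𝓟 SetRel.id ≤ F := by
    refine le_iInf fun k => ?_
    rw [le_principal_iff, mem_principal]
    rintro ⟨x, y⟩ h
    rw [SetRel.mem_id] at h
    subst h
    show x - x ∈ Wseq k
    simpa using h0mem k
  have hsymmF : Tendsto Prod.swap F F := by
    show Filter.map Prod.swap F ≤ ⨅ k, 𝓟 (ent k)
    refine le_iInf fun k => ?_
    rw [le_principal_iff, mem_map]
    refine mem_of_superset (hFmem k) ?_
    rintro ⟨x, y⟩ hp
    have := hsym k _ hp
    show x - y ∈ Wseq k
    simpa using this
  have hcomp : (F.lift' fun s => s ○ s) ≤ F := by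
    refine le_iInf fun k => ?_
    rw [le_principal_iff]
    refine mem_of_superset (Filter.mem_lift' (hFmem (k + 1))) ?_
    rintro ⟨x, z⟩ ⟨y, h1, h2⟩
    have := hadd k _ h2 _ h1
    rw [sub_add_sub_cancel] at this
    exact this
  let U' : UniformSpace X := UniformSpace.ofCore ⟨F, hrefl, hsymmF, hcomp⟩
  have hCG : (𝓤[U']).IsCountablyGenerated := hFbasis.isCountablyGenerated
  let P : PseudoMetricSpace X := @UniformSpace.pseudoMetricSpace X U' hCG
  set d : X → X → ℝ := @dist X P.toDist with hd
  -- the topology of `U'` is coarser than the original topology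
  have hle : ‹TopologicalSpace X› ≤ U'.toTopologicalSpace := by
    refine le_of_nhds_le_nhds fun x => ?_
    rw [@nhds_eq_comap_uniformity X U' x]
    show 𝓝 x ≤ comap (Prod.mk x) F
    rw [hF, comap_iInf]
    refine le_iInf fun k => ?_
    rw [comap_principal, le_principal_iff]
    have hc : Continuous fun y : X => y - x := continuous_id.sub continuous_const
    have : (fun y : X => y - x) ⁻¹' (Wseq k) ∈ 𝓝 x :=
      hc.continuousAt.preimage_mem_nhds (by rw [sub_self]; exact hmem k)
    exact this
  have hdcont : Continuous fun p : X × X => d p.1 p.2 := by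
    have h1 : @Continuous (X × X) ℝ
        (@instTopologicalSpaceProd X X U'.toTopologicalSpace U'.toTopologicalSpace) _
        (fun p : X × X => d p.1 p.2) := @continuous_dist X P
    have hid : @Continuous X X _ U'.toTopologicalSpace id := continuous_id_of_le hle
    have h2 : @Continuous (X × X) (X × X) _
        (@instTopologicalSpaceProd X X U'.toTopologicalSpace U'.toTopologicalSpace)
        (Prod.map id id) :=
      @Continuous.prodMap X X X X U'.toTopologicalSpace U'.toTopologicalSpace _ _ id id hid hid
    exact @Continuous.comp (X × X) (X × X) ℝ _
      (@instTopologicalSpaceProd X X U'.toTopologicalSpace U'.toTopologicalSpace) _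
      (Prod.map id id) (fun p : X × X => d p.1 p.2) h1 h2
  have hment0 : ent 0 ∈ 𝓤[P.toUniformSpace] := hFmem 0
  obtain ⟨c, hc, hcball⟩ := (@Metric.mem_uniformity_dist X P (ent 0)).mp hment0
  refine ⟨d, hdcont, fun x y => @dist_comm X P x y, fun x y z => @dist_triangle X P x y z,
    fun x => @dist_self X P x, c, hc, ?_⟩
  intro x y hxy
  have : (x, y) ∈ ent 0 := hcball hxy
  exact hsub0 this


lemma not_bounded_of_image {Z : Type*} (f : Z → ℝ) (u : ℕ → Z)
    (hfu : ∀ n, f (u n) = n) : ¬ Bornology.IsBounded (f '' Set.range u) := by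
  intro hb
  rw [isBounded_iff_forall_norm_le] at hb
  obtain ⟨C, hC⟩ := hb
  have h1 : ‖f (u (⌈C⌉₊ + 1))‖ ≤ C := hC _ (Set.mem_image_of_mem f ⟨⌈C⌉₊ + 1, rfl⟩)
  rw [hfu, Real.norm_natCast] at h1
  have h2 : C ≤ (⌈C⌉₊ : ℝ) := Nat.le_ceil C
  push_cast at h1
  linarith

lemma fb_totallyBounded {X : Type*} [AddCommGroup X] [TopologicalSpace X]
    [IsTopologicalAddGroup X]
    (hSB : ∀ u : ℕ → X, FunctionallyBoundedIn (weakTopology X) (Set.range u) →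
      FunctionallyBoundedIn ‹TopologicalSpace X› (Set.range u))
    {E : Set X} (hE : FunctionallyBoundedIn (weakTopology X) E) :
    @TotallyBounded X (IsTopologicalAddGroup.rightUniformSpace X) E := by
  classical
  by_contra h
  unfold TotallyBounded at h
  push_neg at h
  obtain ⟨s, hs, hns⟩ := h
  have hs' : s ∈ comap (fun p : X × X => p.2 - p.1) (𝓝 (0 : X)) := by
    have h : (fun p : X × X => p.2 - p.1) = fun p => p.2 + -p.1 := funext fun p => sub_eq_add_neg _ _
    rw [h]; exact hs
  rw [Filter.mem_comap] at hs'
  obtain ⟨W', hW', hW's⟩ := hs'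
  set W : Set X := W' ∩ (fun x : X => -x) ⁻¹' W' with hWdef
  have hWmem : W ∈ 𝓝 (0 : X) :=
    inter_mem hW' (continuous_neg.continuousAt.preimage_mem_nhds (by simpa using hW'))
  have key' : ∀ t : Finset X, ∃ x ∈ E, ∀ y ∈ t, (x, y) ∉ s := by
    intro t
    have h1 := hns t t.finite_toSet
    rw [not_subset] at h1
    obtain ⟨x, hxE, hx⟩ := h1
    refine ⟨x, hxE, fun y hy hxy => hx ?_⟩
    exact mem_biUnion hy hxy
  choose pick hpickE hpick using key'
  let v : ℕ → Finset X := fun n => Nat.rec ∅ (fun _ V => insert (pick V) V) n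
  have hv : ∀ n, v (n + 1) = insert (pick (v n)) (v n) := fun n => rfl
  let u : ℕ → X := fun n => pick (v n)
  have hvmono : Monotone v :=
    monotone_nat_of_le_succ (fun n => by rw [hv]; exact Finset.subset_insert _ _)
  have humem : ∀ m n, m < n → u m ∈ v n := by
    intro m n hmn
    have h1 : u m ∈ v (m + 1) := by rw [hv]; exact Finset.mem_insert_self _ _
    exact hvmono hmn h1
  have hpair : ∀ m n, m < n → (u n, u m) ∉ s := fun m n hmn =>
    hpick (v n) (u m) (humem m n hmn)
  have hdiff : ∀ a b, a ≠ b → u a - u b ∉ W := by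
    intro a b hab hmem'
    rcases hab.lt_or_gt with hlt | hlt
    · exact hpair a b hlt (hW's hmem'.1)
    · refine hpair b a hlt (hW's ?_)
      show u b - u a ∈ W'
      have h2 := hmem'.2
      simpa [neg_sub] using h2
  obtain ⟨d, hdc, hds, hdt, hd0, c, hc, hcb⟩ := exists_group_pseudodist hWmem
  have hsep : ∀ m n, m ≠ n → c ≤ d (u m) (u n) := by
    intro m n hmn
    by_contra hlt
    push_neg at hlt
    exact hdiff n m (Ne.symm hmn) (hcb _ _ hlt)
  obtain ⟨f, hfc, hfu⟩ := exists_unbounded_function d hdc hds hdt hd0 u c hc hsep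
  have hfbw : FunctionallyBoundedIn (weakTopology X) (Set.range u) := by
    intro g hg
    exact (hE g hg).subset (image_mono (range_subset_iff.mpr fun n => hpickE (v n)))
  exact not_bounded_of_image f u hfu (hSB u hfbw f hfc)


/-- Let `X` be a complete maximally almost periodic abelian topological group with the
SB-property (every sequence in `X` functionally bounded in `X⁺` is functionally bounded in
`X`). Then `X` respects compactness (a subset of `X` is compact in `X` if and only if it is
compact in `X⁺`), and `X⁺` is a μ-space: every subset of `X` functionally bounded in `X⁺`
has compact closure in `X⁺`; indeed its closure in `X` is compact in `X`. -/
theorem respects_compactness_and_mu_of_SB {X : Type*} [AddCommGroup X]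
    [TopologicalSpace X] [IsTopologicalAddGroup X] (hMAP : MAPGroup X)
    (hcomplete : GroupComplete X)
    (hSB : ∀ u : ℕ → X, FunctionallyBoundedIn (weakTopology X) (Set.range u) →
      FunctionallyBoundedIn ‹TopologicalSpace X› (Set.range u)) :
    (∀ K : Set X, IsCompact K ↔ @IsCompact X (weakTopology X) K) ∧
      (∀ E : Set X, FunctionallyBoundedIn (weakTopology X) E →
        @IsCompact X (weakTopology X) (@closure X (weakTopology X) E) ∧
          IsCompact (closure E)) := by
  classical
  have hle_weak : ‹TopologicalSpace X› ≤ weakTopology X :=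
    le_iInf fun χ => le_iInf fun hχ => continuous_iff_le_induced.mp hχ
  have hT2 : @T2Space X (weakTopology X) := by
    refine @T2Space.mk X (weakTopology X) ?_
    intro x y hxy
    obtain ⟨χ, hχc, hχne⟩ := hMAP (x - y) (sub_ne_zero.mpr hxy)
    have hχw : @Continuous X UnitAddCircle (weakTopology X) _ χ := by
      rw [continuous_iff_le_induced]
      exact iInf₂_le χ hχc
    have hne : χ x ≠ χ y := fun h => hχne (by rw [map_sub, h, sub_self])
    obtain ⟨U, V, hU, hV, hxU, hyV, hUV⟩ := t2_separation hne
    exact ⟨χ ⁻¹' U, χ ⁻¹' V,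
      @Continuous.isOpen_preimage X UnitAddCircle (weakTopology X) _ χ hχw U hU,
      @Continuous.isOpen_preimage X UnitAddCircle (weakTopology X) _ χ hχw V hV,
      hxU, hyV, hUV.preimage χ⟩
  have hcs : @CompleteSpace X (IsTopologicalAddGroup.rightUniformSpace X) := by
    refine @CompleteSpace.mk X (IsTopologicalAddGroup.rightUniformSpace X) ?_
    intro F hF
    obtain ⟨hne, hcau⟩ := hF
    refine hcomplete F hne ?_
    intro V hV
    have hmem' : {p : X × X | p.2 - p.1 ∈ V} ∈ F ×ˢ F := hcau (by
      have h : {p : X × X | p.2 - p.1 ∈ V} = (fun p : X × X => p.2 + -p.1) ⁻¹' V := by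
        ext p; simp [sub_eq_add_neg]
      rw [h]; exact preimage_mem_comap hV)
    obtain ⟨S, hS, T, hT, hST⟩ := Filter.mem_prod_iff.mp hmem'
    exact ⟨S ∩ T, inter_mem hS hT, fun x hx y hy => hST (Set.mk_mem_prod hx.1 hy.2)⟩
  have hmu : ∀ E : Set X, FunctionallyBoundedIn (weakTopology X) E →
      IsCompact (closure E) := by
    intro E hE
    have htb := fb_totallyBounded hSB hE
    have h1 : @TotallyBounded X (IsTopologicalAddGroup.rightUniformSpace X) (closure E) :=
      @TotallyBounded.closure X (IsTopologicalAddGroup.rightUniformSpace X) E htb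
    have h2 : @IsComplete X (IsTopologicalAddGroup.rightUniformSpace X) (closure E) :=
      @IsClosed.isComplete X (IsTopologicalAddGroup.rightUniformSpace X) hcs (closure E)
        isClosed_closure
    exact (@isCompact_iff_totallyBounded_isComplete X (IsTopologicalAddGroup.rightUniformSpace X)
      (closure E)).mpr ⟨h1, h2⟩
  have hcompat : ∀ K : Set X, IsCompact K → @IsCompact X (weakTopology X) K := by
    intro K hK
    have h1 := @IsCompact.image X X _ (weakTopology X) K id hK (continuous_id_of_le hle_weak)
    simpa using h1
  have hcfb : ∀ (t : TopologicalSpace X) (K : Set X), @IsCompact X t K →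
      FunctionallyBoundedIn t K := by
    intro t K hK f hf
    exact (hK.image hf).isBounded
  have hiff : ∀ K : Set X, IsCompact K ↔ @IsCompact X (weakTopology X) K := by
    intro K
    refine ⟨hcompat K, fun hK => ?_⟩
    have hcl : IsCompact (closure K) := hmu K (hcfb _ K hK)
    have hKclw : @IsClosed X (weakTopology X) K := @IsCompact.isClosed X (weakTopology X) hT2 K hK
    have hKcl : IsClosed K := by
      have hop : @IsOpen X (weakTopology X) Kᶜ := (@isOpen_compl_iff X K (weakTopology X)).mpr hKclw
      have := hop.mono hle_weak
      exact isOpen_compl_iff.mp this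
    exact hcl.of_isClosed_subset hKcl subset_closure
  refine ⟨hiff, ?_⟩
  intro E hE
  have hcl := hmu E hE
  refine ⟨?_, hcl⟩
  have hclw : @IsCompact X (weakTopology X) (closure E) := hcompat _ hcl
  have hclosedw : @IsClosed X (weakTopology X) (closure E) :=
    @IsCompact.isClosed X (weakTopology X) hT2 _ hclw
  have hsub : @closure X (weakTopology X) E ⊆ closure E :=
    @closure_minimal X (weakTopology X) E (closure E) subset_closure hclosedw
  exact @IsCompact.of_isClosed_subset X (weakTopology X) _ _ hclw
    (@isClosed_closure X (weakTopology X) E) hsub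
end

section
/- Let {X_i}_{i ∈ I} be a non-empty family of maximally almost periodic abelian topological groups and let X = ∏_{i ∈ I} X_i with the product topology. Then X has the Schur property if and only if X_i has the Schur property for every i ∈ I. -/
open Filter Topology Set

/-- An abelian topological group has the Schur property if every sequence converging to `0`
in the weak (Bohr) topology converges to `0` in the original topology. -/
def SchurProperty (X : Type*) [AddCommGroup X] [TopologicalSpace X] : Prop :=
  ∀ u : ℕ → X, Tendsto u atTop (@nhds X (weakTopology X) 0) → Tendsto u atTop (𝓝 0)

/-- Convergence in the weak topology is equivalent to convergence under each continuous
character. -/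
lemma tendsto_weakTopology_iff {X : Type*} [AddCommGroup X] [TopologicalSpace X] (u : ℕ → X) :
    Tendsto u atTop (@nhds X (weakTopology X) 0) ↔
      ∀ χ : X →+ UnitAddCircle, Continuous χ → Tendsto (fun n => χ (u n)) atTop (𝓝 0) := by
  rw [weakTopology]
  simp only [_root_.nhds_iInf, tendsto_iInf, nhds_induced, tendsto_comap_iff, map_zero]
  rfl

/-- Let `{X_i}_{i ∈ I}` be a non-empty family of maximally almost periodic abelian
topological groups and let `X = ∏_{i ∈ I} X_i` with the product topology. Then `X` has the
Schur property if and only if `X_i` has the Schur property for every `i ∈ I`. -/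
theorem schur_pi_iff {I : Type*} [Nonempty I] (X : I → Type*)
    [∀ i, AddCommGroup (X i)] [∀ i, TopologicalSpace (X i)]
    [∀ i, IsTopologicalAddGroup (X i)] (hMAP : ∀ i, MAPGroup (X i)) :
    SchurProperty (∀ i, X i) ↔ ∀ i, SchurProperty (X i) := by
  classical
  constructor
  · intro h i u hu
    have key : Tendsto (fun n => Pi.single i (u n)) atTop (𝓝 (0 : ∀ i, X i)) := by
      apply h
      rw [tendsto_weakTopology_iff]
      intro χ hχ
      have hcomp : Continuous (χ.comp (AddMonoidHom.single X i)) :=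
        hχ.comp (continuous_single i)
      have := (tendsto_weakTopology_iff u).mp hu (χ.comp (AddMonoidHom.single X i)) hcomp
      simpa [AddMonoidHom.single_apply] using this
    have := (tendsto_pi_nhds.mp key) i
    simpa [Pi.single_eq_same] using this
  · intro h u hu
    rw [tendsto_pi_nhds]
    intro i
    apply h i
    rw [tendsto_weakTopology_iff]
    intro χ hχ
    have hcomp : Continuous (χ.comp (Pi.evalAddMonoidHom X i)) :=
      hχ.comp (continuous_apply i)
    have := (tendsto_weakTopology_iff u).mp hu (χ.comp (Pi.evalAddMonoidHom X i)) hcomp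
    simpa using this
end
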